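/- arXiv:2108.01247 — 5 statements merged into one kernel-verified Lean document; each statement's English description precedes it below -/
import Mathlib

section
/- The Apéry constant satisfies ζ(3) = (16/(5π)) ∫₀¹ (arcsin x · (arccos x)²)/x dx, where the integral is taken over the real interval [0,1]. -/
set_option maxHeartbeats 1000000

open Real Set MeasureTheory intervalIntegral Filter Topology



noncomputable def htil (x : ℝ) : ℝ := if x = 0 then (π/2)^2 else arcsin x * arccos x ^ 2 / x

lemma htil_contOn : ContinuousOn htil (Icc 0 1) := by
  intro x hx
  rcases eq_or_ne x 0 with rfl | hx0
  · rw [← continuousWithinAt_diff_self]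
    have hlim : Tendsto (fun y : ℝ => arcsin y / y * arccos y ^ 2) (𝓝[Icc (0:ℝ) 1 \ {0}] 0)
        (𝓝 ((π/2)^2)) := by
      have h1 : Tendsto (fun y : ℝ => arcsin y / y) (𝓝[≠] (0:ℝ)) (𝓝 1) := by
        have := (Real.hasDerivAt_arcsin (by norm_num) (by norm_num) (x := 0))
        rw [hasDerivAt_iff_tendsto_slope] at this
        simp only [slope_fun_def, Real.arcsin_zero] at this
        norm_num at this
        refine this.congr fun y => ?_
        rw [div_eq_inv_mul]
      have h2 : Tendsto (fun y : ℝ => arccos y ^ 2) (𝓝 (0:ℝ)) (𝓝 ((π/2)^2)) := by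
        have := (Real.continuous_arccos.tendsto 0).pow 2
        simpa [Real.arccos_zero] using this
      have h3 : Tendsto (fun y : ℝ => y) (𝓝[Icc (0:ℝ) 1 \ {0}] 0) (𝓝[≠] (0:ℝ)) :=
        tendsto_nhdsWithin_mono_left (fun y hy => hy.2) tendsto_id
      have h4 : Tendsto (fun y : ℝ => y) (𝓝[Icc (0:ℝ) 1 \ {0}] 0) (𝓝 (0:ℝ)) :=
        tendsto_nhdsWithin_mono_left (fun y hy => hy.2) nhdsWithin_le_nhds
      simpa using (h1.comp h3).mul (h2.comp h4)
    have heq : ∀ y ∈ Icc (0:ℝ) 1 \ {0}, (fun y : ℝ => arcsin y / y * arccos y ^ 2) y = htil y := by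
      intro y hy
      have : y ≠ 0 := hy.2
      simp only [htil, if_neg this]
      field_simp
    unfold ContinuousWithinAt
    rw [show htil 0 = (π/2)^2 from if_pos rfl]
    exact tendsto_nhdsWithin_congr heq hlim
  · have : ContinuousAt htil x := by
      have hev : ∀ᶠ y in 𝓝 x, arcsin y * arccos y ^ 2 / y = htil y := by
        filter_upwards [isOpen_ne.mem_nhds hx0] with y hy
        simp [htil, if_neg hy]
      apply ContinuousAt.congr ?_ hev
      exact ((Real.continuous_arcsin.mul (Real.continuous_arccos.pow 2)).continuousAt).div continuousAt_id hx0
    exact this.continuousWithinAt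


lemma subst_eq : (∫ x in (0:ℝ)..1, arcsin x * arccos x ^ 2 / x)
    = ∫ θ in (0:ℝ)..(π/2), cos θ * htil (sin θ) := by
  have h2 : (0:ℝ) ≤ π/2 := by positivity
  have huIcc : Set.uIcc (0:ℝ) (π/2) = Icc 0 (π/2) := uIcc_of_le h2
  have himg : Real.sin '' Set.uIcc (0:ℝ) (π/2) ⊆ Icc 0 1 := by
    rw [huIcc]
    rintro y ⟨x, hx, rfl⟩
    exact ⟨Real.sin_nonneg_of_nonneg_of_le_pi hx.1 (hx.2.trans (by linarith [pi_pos])),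
      Real.sin_le_one x⟩
  have hsub := intervalIntegral.integral_comp_smul_deriv'' (a := (0:ℝ)) (b := π/2)
    (f := Real.sin) (f' := Real.cos) (g := htil)
    Real.continuous_sin.continuousOn
    (fun x _ => (Real.hasDerivAt_sin x).hasDerivWithinAt)
    Real.continuous_cos.continuousOn
    (htil_contOn.mono himg)
  rw [Real.sin_zero, Real.sin_pi_div_two] at hsub
  have e1 : (∫ x in (0:ℝ)..1, arcsin x * arccos x ^ 2 / x) = ∫ x in (0:ℝ)..1, htil x := by
    apply intervalIntegral.integral_congr_ae
    filter_upwards [] with x hx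
    rw [uIoc_of_le (by norm_num : (0:ℝ) ≤ 1)] at hx
    rw [htil, if_neg (ne_of_gt hx.1)]
  have e2 : (∫ θ in (0:ℝ)..(π/2), cos θ * htil (sin θ))
      = ∫ x in (0:ℝ)..(π/2), cos x • (htil ∘ sin) x := by
    simp [smul_eq_mul, Function.comp]
  rw [e1, e2, hsub]


lemma telescope (N : ℕ) (θ : ℝ) :
    Real.cos θ - Real.cos ((2*N+1)*θ)
      = ∑ j ∈ Finset.range N, 2 * Real.sin ((2*(j:ℝ)+2)*θ) * Real.sin θ := by
  have h := Finset.sum_range_sub' (f := fun j : ℕ => Real.cos ((2*(j:ℝ)+1)*θ)) N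
  have h2 : ∀ j ∈ Finset.range N,
      Real.cos ((2*(j:ℝ)+1)*θ) - Real.cos ((2*((j:ℝ)+1)+1)*θ)
        = 2 * Real.sin ((2*(j:ℝ)+2)*θ) * Real.sin θ := by
    intro j _
    rw [Real.cos_sub_cos]
    rw [show ((2*(j:ℝ)+1)*θ + (2*((j:ℝ)+1)+1)*θ)/2 = (2*(j:ℝ)+2)*θ by ring,
        show ((2*(j:ℝ)+1)*θ - (2*((j:ℝ)+1)+1)*θ)/2 = -θ by ring, Real.sin_neg]
    ring
  rw [← Finset.sum_congr rfl h2]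
  push_cast at h
  rw [h]
  norm_num
lemma kernel (N : ℕ) (θ : ℝ) (hθ : θ ∈ Icc 0 (π/2)) :
    Real.cos θ * htil (Real.sin θ)
      = (∑ j ∈ Finset.range N,
          2 * ((θ^3 - π*θ^2 + π^2*θ/4) * Real.sin ((2*(j:ℝ)+2)*θ)))
        + Real.cos ((2*(N:ℝ)+1)*θ) * htil (Real.sin θ) := by
  rcases eq_or_ne θ 0 with rfl | hθ0
  · simp [htil]
  · have hθpos : 0 < θ := lt_of_le_of_ne hθ.1 (Ne.symm hθ0)
    have hsin : 0 < Real.sin θ :=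
      Real.sin_pos_of_pos_of_lt_pi hθpos (lt_of_le_of_lt hθ.2 (by linarith [pi_pos]))
    have hs : Real.sin θ ≠ 0 := ne_of_gt hsin
    have harcsin : Real.arcsin (Real.sin θ) = θ :=
      Real.arcsin_sin (by linarith [hθ.1, pi_pos]) hθ.2
    have hh : htil (Real.sin θ) = (θ^3 - π*θ^2 + π^2*θ/4) / Real.sin θ := by
      rw [htil, if_neg hs, harcsin, Real.arccos_eq_pi_div_two_sub_arcsin, harcsin]
      field_simp
      ring
    rw [hh]
    have hK := telescope N θ
    have hterm : ∀ j ∈ Finset.range N,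
        2 * ((θ^3 - π*θ^2 + π^2*θ/4) * Real.sin ((2*(j:ℝ)+2)*θ))
          = ((θ^3 - π*θ^2 + π^2*θ/4) / Real.sin θ) * (2 * Real.sin ((2*(j:ℝ)+2)*θ) * Real.sin θ) := by
      intro j _
      field_simp
    rw [Finset.sum_congr rfl hterm, ← Finset.mul_sum, ← hK]
    field_simp
    ring


lemma hasDerivAt_F (a : ℝ) (ha : a ≠ 0) (x : ℝ) :
    HasDerivAt (fun θ : ℝ =>
      -((θ^3 - π*θ^2 + π^2*θ/4) * Real.cos (a*θ)) / a
      + ((3*θ^2 - 2*π*θ + π^2/4) * Real.sin (a*θ)) / a^2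
      + ((6*θ - 2*π) * Real.cos (a*θ)) / a^3
      - (6 * Real.sin (a*θ)) / a^4)
    ((x^3 - π*x^2 + π^2*x/4) * Real.sin (a*x)) x := by
  have hlin : HasDerivAt (fun θ : ℝ => a*θ) a x := by
    simpa using (hasDerivAt_id x).const_mul a
  have hc : HasDerivAt (fun θ : ℝ => Real.cos (a*θ)) (-Real.sin (a*x) * a) x :=
    (Real.hasDerivAt_cos (a*x)).comp x hlin
  have hs : HasDerivAt (fun θ : ℝ => Real.sin (a*θ)) (Real.cos (a*x) * a) x :=
    (Real.hasDerivAt_sin (a*x)).comp x hlin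
  have hp1 : HasDerivAt (fun θ : ℝ => θ^3 - π*θ^2 + π^2*θ/4) (3*x^2 - 2*π*x + π^2/4) x := by
    have := ((hasDerivAt_pow 3 x).sub ((hasDerivAt_pow 2 x).const_mul π)).add
      (((hasDerivAt_id x).const_mul (π^2)).div_const 4)
    exact this.congr_deriv (by push_cast; ring)
  have hp2 : HasDerivAt (fun θ : ℝ => 3*θ^2 - 2*π*θ + π^2/4) (6*x - 2*π) x := by
    have := (((hasDerivAt_pow 2 x).const_mul 3).sub ((hasDerivAt_id x).const_mul (2*π))).add_const (π^2/4)
    exact this.congr_deriv (by push_cast; ring)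
  have hp3 : HasDerivAt (fun θ : ℝ => 6*θ - 2*π) 6 x := by
    have := ((hasDerivAt_id x).const_mul 6).sub_const (2*π)
    exact this.congr_deriv (by ring)
  have H := ((((hp1.mul hc).neg.div_const a).add ((hp2.mul hs).div_const (a^2))).add
      ((hp3.mul hc).div_const (a^3))).sub ((hs.const_mul 6).div_const (a^4))
  exact H.congr_deriv (by field_simp; ring)


lemma B_eval (j : ℕ) :
    (∫ θ in (0:ℝ)..(π/2), 2 * ((θ^3 - π*θ^2 + π^2*θ/4) * Real.sin ((2*(j:ℝ)+2)*θ)))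
      = π * ((-1:ℝ)^(j+1) + 2) / (4*((j:ℝ)+1)^3) := by
  set a : ℝ := 2*(j:ℝ)+2 with ha_def
  have ha : a ≠ 0 := by positivity
  rw [intervalIntegral.integral_const_mul]
  rw [intervalIntegral.integral_eq_sub_of_hasDerivAt
    (fun x _ => hasDerivAt_F a ha x)
    ((by continuity : Continuous (fun θ : ℝ => (θ^3 - π*θ^2 + π^2*θ/4) * Real.sin ((2*(j:ℝ)+2)*θ))).intervalIntegrable 0 (π/2))]
  have hcos : Real.cos (a*(π/2)) = (-1:ℝ)^(j+1) := by
    have : a*(π/2) = ((j+1 : ℕ):ℝ)*π := by push_cast; ring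
    rw [this]
    simpa using Real.cos_add_nat_mul_pi 0 (j+1)
  have hsin : Real.sin (a*(π/2)) = 0 := by
    have : a*(π/2) = ((j+1 : ℕ):ℝ)*π := by push_cast; ring
    rw [this]
    exact Real.sin_nat_mul_pi (j+1)
  rw [hcos, hsin]
  rw [show a * 0 = 0 by ring, Real.cos_zero, Real.sin_zero]
  have hane : ((j:ℝ)+1) ≠ 0 := by positivity
  field_simp
  ring


lemma g_contOn : ContinuousOn (fun θ => htil (Real.sin θ)) (Icc 0 (π/2)) := by
  apply htil_contOn.comp Real.continuous_sin.continuousOn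
  intro x hx
  exact ⟨Real.sin_nonneg_of_nonneg_of_le_pi hx.1 (hx.2.trans (by linarith [pi_pos])),
    Real.sin_le_one x⟩

lemma remainder_tendsto :
    Tendsto (fun N : ℕ => ∫ θ in (0:ℝ)..(π/2), Real.cos ((2*(N:ℝ)+1)*θ) * htil (Real.sin θ))
      atTop (𝓝 0) := by
  set g : ℝ → ℝ := fun θ => htil (Real.sin θ) with hg_def
  set gc : ℝ → ℂ := Set.indicator (Icc 0 (π/2)) (fun θ => (g θ : ℂ)) with hgc_def
  have h0 : (0:ℝ) ≤ π/2 := by positivity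
  have huIcc : Set.uIcc (0:ℝ) (π/2) = Icc 0 (π/2) := uIcc_of_le h0
  -- step1
  have step1 : ∀ b : ℝ, (∫ v : ℝ, Real.fourierChar (-(v * (-(b/(2*π))))) • gc v)
      = ∫ θ in (0:ℝ)..(π/2), Complex.exp ((b*θ : ℝ) * Complex.I) * (g θ : ℂ) := by
    intro b
    have h1 : (fun v : ℝ => Real.fourierChar (-(v * (-(b/(2*π))))) • gc v)
        = Set.indicator (Icc (0:ℝ) (π/2))
            (fun v => Complex.exp ((b*v : ℝ) * Complex.I) * (g v:ℂ)) := by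
      funext v
      have harg : 2 * π * -(v * -(b/(2*π))) = b * v := by
        field_simp
      by_cases hv : v ∈ Icc (0:ℝ) (π/2)
      · simp only [hgc_def, Set.indicator_of_mem hv, Circle.smul_def, Real.fourierChar_apply,
          harg, smul_eq_mul]
      · simp [hgc_def, Set.indicator_of_notMem hv]
    rw [h1, MeasureTheory.integral_indicator measurableSet_Icc,
        MeasureTheory.integral_Icc_eq_integral_Ioc,
        ← intervalIntegral.integral_of_le h0]
  -- Riemann-Lebesgue
  have hRL := Real.tendsto_integral_exp_smul_cocompact gc
  have hsup : cocompact ℝ = atBot ⊔ atTop := cocompact_eq_atBot_atTop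
  have hbase : Tendsto (fun N : ℕ => (2*(N:ℝ)+1)/(2*π)) atTop atTop := by
    apply Tendsto.atTop_div_const (by positivity)
    apply tendsto_atTop_add_const_right
    exact (tendsto_natCast_atTop_atTop).const_mul_atTop two_pos
  have htend₁ : Tendsto (fun N : ℕ => -((2*(N:ℝ)+1)/(2*π))) atTop (cocompact ℝ) := by
    rw [hsup]
    exact (tendsto_neg_atTop_atBot.comp hbase).mono_right le_sup_left
  have htend₂ : Tendsto (fun N : ℕ => -((-(2*(N:ℝ)+1))/(2*π))) atTop (cocompact ℝ) := by
    rw [hsup]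
    refine Tendsto.mono_right ?_ le_sup_right
    refine hbase.congr fun N => by ring
  have hE₁ := hRL.comp htend₁
  have hE₂ := hRL.comp htend₂
  have hlim : Tendsto (fun N : ℕ =>
      (1/2 : ℂ) * ((∫ v : ℝ, Real.fourierChar (-(v * (-((2*(N:ℝ)+1)/(2*π))))) • gc v)
        + (∫ v : ℝ, Real.fourierChar (-(v * (-((-(2*(N:ℝ)+1))/(2*π))))) • gc v)))
      atTop (𝓝 0) := by
    have := (hE₁.add hE₂).const_mul (1/2 : ℂ)
    simpa using this
  -- identification
  have hid : ∀ N : ℕ, ((∫ θ in (0:ℝ)..(π/2), Real.cos ((2*(N:ℝ)+1)*θ) * g θ : ℝ) : ℂ)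
      = (1/2 : ℂ) * ((∫ v : ℝ, Real.fourierChar (-(v * (-((2*(N:ℝ)+1)/(2*π))))) • gc v)
        + (∫ v : ℝ, Real.fourierChar (-(v * (-((-(2*(N:ℝ)+1))/(2*π))))) • gc v)) := by
    intro N
    rw [step1 (2*(N:ℝ)+1), step1 (-(2*(N:ℝ)+1))]
    have hgcont : ContinuousOn (fun θ : ℝ => (g θ : ℂ)) (Icc 0 (π/2)) :=
      Complex.continuous_ofReal.comp_continuousOn g_contOn
    have hi1 : IntervalIntegrable
        (fun θ : ℝ => Complex.exp (((2*(N:ℝ)+1)*θ : ℝ) * Complex.I) * (g θ : ℂ))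
        volume 0 (π/2) := by
      apply ContinuousOn.intervalIntegrable
      rw [huIcc]
      have : Continuous (fun θ : ℝ => (((2*(N:ℝ)+1)*θ : ℝ) : ℂ) * Complex.I) :=
        (Complex.continuous_ofReal.comp (by fun_prop)).mul continuous_const
      exact ((Complex.continuous_exp.comp this).continuousOn).mul hgcont
    have hi2 : IntervalIntegrable
        (fun θ : ℝ => Complex.exp ((-(2*(N:ℝ)+1)*θ : ℝ) * Complex.I) * (g θ : ℂ))
        volume 0 (π/2) := by
      apply ContinuousOn.intervalIntegrable
      rw [huIcc]
      have : Continuous (fun θ : ℝ => ((-(2*(N:ℝ)+1)*θ : ℝ) : ℂ) * Complex.I) :=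
        (Complex.continuous_ofReal.comp (by fun_prop)).mul continuous_const
      exact ((Complex.continuous_exp.comp this).continuousOn).mul hgcont
    rw [← intervalIntegral.integral_add hi1 hi2, ← intervalIntegral.integral_const_mul,
        ← intervalIntegral.integral_ofReal]
    apply intervalIntegral.integral_congr
    intro θ _
    have hmz : (-(2*(N:ℝ)+1)*θ) = -((2*(N:ℝ)+1)*θ) := by ring
    beta_reduce
    rw [hmz]
    set y : ℝ := (2*(N:ℝ)+1)*θ
    push_cast [Complex.exp_mul_I, Complex.ofReal_cos, Complex.ofReal_sin, Complex.cos_neg,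
      Complex.sin_neg]
    ring
  have hC : Tendsto (fun N : ℕ =>
      ((∫ θ in (0:ℝ)..(π/2), Real.cos ((2*(N:ℝ)+1)*θ) * g θ : ℝ) : ℂ)) atTop (𝓝 0) := by
    refine Tendsto.congr (fun N => (hid N).symm) hlim
  have := (Complex.continuous_re.tendsto 0).comp hC
  simpa [hg_def, Function.comp_def] using this


noncomputable def Sz : ℝ := ∑' n : ℕ, 1/((n:ℝ)+1)^3

lemma s_summable : Summable (fun n : ℕ => 1/((n:ℝ)+1)^3) := by
  have h1 : Summable (fun n : ℕ => 1/(n:ℝ)^3) :=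
    Real.summable_one_div_nat_pow.mpr (by norm_num)
  have h2 := (summable_nat_add_iff 1).mpr h1
  refine h2.congr fun n => ?_
  push_cast
  ring

lemma core : (∫ θ in (0:ℝ)..(π/2), Real.cos θ * htil (Real.sin θ)) = 5*π/16 * Sz := by
  set J : ℝ := ∫ θ in (0:ℝ)..(π/2), Real.cos θ * htil (Real.sin θ) with hJ_def
  have h0 : (0:ℝ) ≤ π/2 := by positivity
  have huIcc : Set.uIcc (0:ℝ) (π/2) = Icc 0 (π/2) := uIcc_of_le h0
  set c : ℕ → ℝ := fun j => π * ((-1:ℝ)^(j+1) + 2) / (4*((j:ℝ)+1)^3) with hc_def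
  -- split of J
  have hsplit : ∀ N : ℕ, J = (∑ j ∈ Finset.range N, c j)
      + ∫ θ in (0:ℝ)..(π/2), Real.cos ((2*(N:ℝ)+1)*θ) * htil (Real.sin θ) := by
    intro N
    have hcongr : J = ∫ θ in (0:ℝ)..(π/2),
        ((∑ j ∈ Finset.range N,
          2 * ((θ^3 - π*θ^2 + π^2*θ/4) * Real.sin ((2*(j:ℝ)+2)*θ)))
        + Real.cos ((2*(N:ℝ)+1)*θ) * htil (Real.sin θ)) := by
      apply intervalIntegral.integral_congr
      intro θ hθ
      rw [huIcc] at hθ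
      exact kernel N θ hθ
    have hint1 : ∀ j : ℕ, IntervalIntegrable
        (fun θ : ℝ => 2 * ((θ^3 - π*θ^2 + π^2*θ/4) * Real.sin ((2*(j:ℝ)+2)*θ)))
        volume 0 (π/2) := by
      intro j
      exact ((by fun_prop : Continuous (fun θ : ℝ =>
        2 * ((θ^3 - π*θ^2 + π^2*θ/4) * Real.sin ((2*(j:ℝ)+2)*θ)))).intervalIntegrable 0 (π/2))
    have hintsum : IntervalIntegrable
        (fun θ : ℝ => ∑ j ∈ Finset.range N,
          2 * ((θ^3 - π*θ^2 + π^2*θ/4) * Real.sin ((2*(j:ℝ)+2)*θ))) volume 0 (π/2) := by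
      have h : Continuous (fun θ : ℝ => ∑ j ∈ Finset.range N,
          2 * ((θ^3 - π*θ^2 + π^2*θ/4) * Real.sin ((2*(j:ℝ)+2)*θ))) := by
        apply continuous_finset_sum
        intro j _
        fun_prop
      exact h.intervalIntegrable 0 (π/2)
    have hintrem : IntervalIntegrable
        (fun θ : ℝ => Real.cos ((2*(N:ℝ)+1)*θ) * htil (Real.sin θ)) volume 0 (π/2) := by
      apply ContinuousOn.intervalIntegrable
      rw [huIcc]
      exact ((by fun_prop : Continuous (fun θ : ℝ => Real.cos ((2*(N:ℝ)+1)*θ))).continuousOn).mul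
        g_contOn
    rw [hcongr, intervalIntegral.integral_add hintsum hintrem,
      intervalIntegral.integral_finset_sum (fun j _ => hint1 j)]
    congr 1
    exact Finset.sum_congr rfl fun j _ => B_eval j
  -- partial sums tend to J
  have htendsto : Tendsto (fun N : ℕ => ∑ j ∈ Finset.range N, c j) atTop (𝓝 J) := by
    have : (fun N : ℕ => ∑ j ∈ Finset.range N, c j)
        = fun N : ℕ => J - ∫ θ in (0:ℝ)..(π/2), Real.cos ((2*(N:ℝ)+1)*θ) * htil (Real.sin θ) := by
      funext N
      have := hsplit N
      linarith
    rw [this]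
    simpa using tendsto_const_nhds.sub remainder_tendsto
  have hnonneg : ∀ j : ℕ, 0 ≤ c j := by
    intro j
    have h1 : (-1:ℝ) ≤ (-1:ℝ)^(j+1) := by
      rcases Nat.even_or_odd (j+1) with h | h
      · rw [h.neg_one_pow]; norm_num
      · rw [h.neg_one_pow]
    have h2 : (0:ℝ) < ((j:ℝ)+1)^3 := by positivity
    have : (0:ℝ) ≤ (-1:ℝ)^(j+1) + 2 := by linarith
    positivity
  have hhs : HasSum c J := (hasSum_iff_tendsto_nat_of_nonneg hnonneg J).mpr htendsto
  -- evaluate tsum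
  set d : ℕ → ℝ := fun j => (-1:ℝ)^(j+1)/((j:ℝ)+1)^3 with hd_def
  set s : ℕ → ℝ := fun j => 1/((j:ℝ)+1)^3 with hs_def
  have hs_sum : Summable s := s_summable
  have hd_sum : Summable d := by
    apply Summable.of_abs
    refine hs_sum.congr fun j => ?_
    rw [hs_def, hd_def]
    simp [abs_div, abs_pow, abs_of_nonneg (show (0:ℝ) ≤ (j:ℝ)+1 by positivity)]
  have hc_eq : ∀ j, c j = (π/4) * d j + (π/2) * s j := by
    intro j
    rw [hc_def, hd_def, hs_def]
    have : ((j:ℝ)+1)^3 ≠ 0 := by positivity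
    field_simp
    ring
  have hJ_eq : J = (π/4) * (∑' j, d j) + (π/2) * (∑' j, s j) := by
    have h1 : HasSum (fun j => (π/4) * d j + (π/2) * s j)
        ((π/4) * (∑' j, d j) + (π/2) * (∑' j, s j)) :=
      ((hd_sum.hasSum.mul_left (π/4)).add (hs_sum.hasSum.mul_left (π/2)))
    have h2 : HasSum c ((π/4) * (∑' j, d j) + (π/2) * (∑' j, s j)) := by
      rw [show c = (fun j => (π/4) * d j + (π/2) * s j) from funext hc_eq]
      exact h1
    exact hhs.unique h2
  -- even/odd splits
  have hinj2 : Function.Injective (fun k : ℕ => 2*k) := fun a b h => by have h' : 2*a = 2*b := h; omega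
  have hd_even : Summable (fun k : ℕ => d (2*k)) := hd_sum.comp_injective hinj2
  have hd_odd : Summable (fun k : ℕ => d (2*k+1)) :=
    hd_sum.comp_injective (fun a b h => by have h' : 2*a+1 = 2*b+1 := h; omega)
  have hs_even : Summable (fun k : ℕ => s (2*k)) := hs_sum.comp_injective hinj2
  have hs_odd : Summable (fun k : ℕ => s (2*k+1)) :=
    hs_sum.comp_injective (fun a b h => by have h' : 2*a+1 = 2*b+1 := h; omega)
  have hA := tsum_even_add_odd hd_even hd_odd
  have hSsplit := tsum_even_add_odd hs_even hs_odd
  have he1 : ∀ k : ℕ, d (2*k) = - s (2*k) := by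
    intro k
    rw [hd_def, hs_def]
    have : Odd (2*k+1) := ⟨k, by ring⟩
    simp only [this.neg_one_pow]
    push_cast
    ring
  have he2 : ∀ k : ℕ, d (2*k+1) = s (2*k+1) := by
    intro k
    rw [hd_def, hs_def]
    have : Even (2*k+1+1) := ⟨k+1, by ring⟩
    simp only [this.neg_one_pow]
  have he3 : (∑' k : ℕ, s (2*k+1)) = (1/8) * Sz := by
    have hpt : ∀ k : ℕ, s (2*k+1) = (1/8) * s k := by
      intro k
      rw [hs_def]
      have h8 : ((k:ℝ)+1) ≠ 0 := by positivity
      push_cast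
      field_simp
      ring
    rw [tsum_congr hpt, tsum_mul_left]
    rfl
  have hSz : (∑' j, s j) = Sz := rfl
  have hs_even_val : (∑' k : ℕ, s (2*k)) = (7/8) * Sz := by
    have := hSsplit
    rw [he3, hSz] at this
    linarith
  have hA_val : (∑' j, d j) = -(3/4) * Sz := by
    have h1 : (∑' k : ℕ, d (2*k)) = - ((7/8) * Sz) := by
      rw [tsum_congr he1, tsum_neg, hs_even_val]
    have h2 : (∑' k : ℕ, d (2*k+1)) = (1/8) * Sz := by
      rw [tsum_congr he2, he3]
    rw [← hA, h1, h2]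
    ring
  rw [hJ_eq, hA_val, hSz]
  ring


lemma zeta_eq : riemannZeta 3 = (Sz : ℂ) := by
  have hz := zeta_nat_eq_tsum_of_gt_one (k := 3) (by norm_num)
  have h3 : ((3:ℕ):ℂ) = (3:ℂ) := by norm_num
  rw [h3] at hz
  rw [hz]
  have hsc : Summable (fun n : ℕ => 1/(n:ℂ)^3) := by
    apply Summable.of_norm
    have : Summable (fun n : ℕ => 1/(n:ℝ)^3) := Real.summable_one_div_nat_pow.mpr (by norm_num)
    refine this.congr fun n => ?_
    simp [norm_div]
  rw [hsc.tsum_eq_zero_add]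
  have h0 : (1:ℂ)/((0:ℕ):ℂ)^3 = 0 := by norm_num
  rw [h0, zero_add]
  rw [Sz, Complex.ofReal_tsum]
  apply tsum_congr
  intro n
  push_cast
  norm_num

open Real in
theorem zeta_three_eq_arcsin_arccos_sq_integral :
    riemannZeta 3 =
      ((16 / (5 * π)) * ∫ x in (0:ℝ)..1, arcsin x * (arccos x) ^ 2 / x : ℝ) := by
  have hS : (∫ x in (0:ℝ)..1, arcsin x * arccos x ^ 2 / x) = 5*π/16 * Sz :=
    subst_eq.trans core
  rw [zeta_eq, hS]
  norm_cast
  field_simp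
end

section
/- The Apéry constant satisfies ζ(3) = (32/(3π)) ∫₀¹ ((arsinh x)² · arccos x)/x dx, where the integral is taken over the real interval [0,1]. -/
open Real MeasureTheory intervalIntegral in
private lemma ftc_t (x s : ℝ) :
    ∫ t in (0:ℝ)..x, 2*t*s/(1+t^2*s^2) = log (1+x^2*s^2) / s := by
  rcases eq_or_ne s 0 with rfl | hs
  · simp
  · have h : ∀ t ∈ Set.uIcc (0:ℝ) x,
        HasDerivAt (fun t => log (1+t^2*s^2) / s) (2*t*s/(1+t^2*s^2)) t := by
      intro t _
      have hpos : (0:ℝ) < 1 + t^2*s^2 := by positivity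
      have h1 : HasDerivAt (fun t : ℝ => 1+t^2*s^2) (2*t*s^2) t := by
        simpa [mul_comm] using (((hasDerivAt_pow 2 t).mul_const (s^2)).const_add 1)
      have h2 := (h1.log hpos.ne').div_const s
      refine h2.congr_deriv (Eq.symm ?_)
      field_simp
    rw [integral_eq_sub_of_hasDerivAt h ?_]
    · simp
    · apply Continuous.intervalIntegrable
      refine Continuous.div (by fun_prop) (by fun_prop) (fun t => by positivity)

open Real MeasureTheory intervalIntegral in
private lemma ftc_theta (t : ℝ) :
    ∫ θ in (0:ℝ)..(π/2), t * sin θ / (1 + t^2 * sin θ^2) = arsinh t / √(1+t^2) := by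
  set A := √(1+t^2) with hA
  have hApos : 0 < A := Real.sqrt_pos.mpr (by positivity)
  have hA2 : A^2 = 1 + t^2 := Real.sq_sqrt (by positivity)
  have key : ∀ θ ∈ Set.uIcc (0:ℝ) (π/2),
      HasDerivAt (fun θ : ℝ => -(A⁻¹ * arsinh (t * cos θ / √(1 + t^2 * sin θ^2))))
        (t * sin θ / (1 + t^2 * sin θ^2)) θ := by
    intro θ _
    set s := sin θ
    set c := cos θ
    have hpyth : s^2 + c^2 = 1 := Real.sin_sq_add_cos_sq θ
    have hq : (0:ℝ) < 1 + t^2 * s^2 := by positivity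
    set w := √(1 + t^2 * s^2) with hw
    have hwpos : 0 < w := Real.sqrt_pos.mpr hq
    have hw2 : w^2 = 1 + t^2 * s^2 := Real.sq_sqrt hq.le
    have hqd : HasDerivAt (fun θ : ℝ => 1 + t^2 * sin θ^2)
        (t^2 * (2 * sin θ ^ 1 * cos θ)) θ :=
      (((Real.hasDerivAt_sin θ).pow 2).const_mul (t^2)).const_add 1
    have hwd : HasDerivAt (fun θ : ℝ => √(1 + t^2 * sin θ^2))
        (t^2 * (2 * sin θ ^ 1 * cos θ) / (2 * w)) θ := hqd.sqrt hq.ne'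
    have hud : HasDerivAt (fun θ : ℝ => t * cos θ) (-(t * sin θ)) θ := by
      simpa [mul_comm, mul_neg] using (Real.hasDerivAt_cos θ).const_mul t
    have hgd : HasDerivAt (fun θ : ℝ => t * cos θ / √(1 + t^2 * sin θ^2))
        ((-(t * s) * w - (t * c) * (t^2 * (2 * s ^ 1 * c) / (2 * w))) / w^2) θ :=
      hud.div hwd hwpos.ne'
    have had := (Real.hasDerivAt_arsinh (t * c / w)).comp θ hgd
    have hFd := (had.const_mul A⁻¹).neg
    have hsq : √(1 + (t * c / w)^2) = A / w := by
      have h1 : 1 + (t * c / w)^2 = (1 + t^2) / w^2 := by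
        field_simp
        linear_combination hw2 + t^2 * hpyth
      rw [h1, Real.sqrt_div (by positivity) _, Real.sqrt_sq hwpos.le]
    rw [Function.comp_def] at hFd
    refine hFd.congr_deriv (Eq.symm ?_)
    rw [hsq]
    field_simp
    linear_combination (t*s*w^2) * hA2 + (t^3*s*(1-s^2)) * hw2
      - (t^3*s*(1+t^2*s^2)) * hpyth
  rw [intervalIntegral.integral_eq_sub_of_hasDerivAt key (by
    apply Continuous.intervalIntegrable
    refine Continuous.div (by fun_prop) (by fun_prop) (fun θ => by positivity))]
  norm_num [Real.cos_pi_div_two, Real.sin_pi_div_two, Real.sin_zero, Real.cos_zero,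
    Real.arsinh_zero]
  rw [div_eq_inv_mul]

open Real MeasureTheory intervalIntegral in
private lemma arsinh_sq_eq (x : ℝ) (hx : 0 ≤ x) :
    arsinh x ^ 2 = ∫ θ in (0:ℝ)..(π/2), log (1 + x^2 * sin θ^2) / sin θ := by
  have hπ : (0:ℝ) ≤ π/2 := by positivity
  have h1 : Set.EqOn (fun θ : ℝ => log (1 + x^2 * sin θ^2) / sin θ)
      (fun θ : ℝ => ∫ t in (0:ℝ)..x, 2*t*sin θ/(1+t^2*sin θ^2))
      (Set.uIcc (0:ℝ) (π/2)) := fun θ _ => (ftc_t x (sin θ)).symm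
  rw [intervalIntegral.integral_congr h1]
  have hcont : Continuous (Function.uncurry fun θ t : ℝ => 2*t*sin θ/(1+t^2*sin θ^2)) := by
    apply Continuous.div (by fun_prop) (by fun_prop) ?_
    rintro ⟨θ, t⟩
    simp only [Function.uncurry]
    positivity
  have hswap :
      (∫ θ in (0:ℝ)..(π/2), ∫ t in (0:ℝ)..x, 2*t*sin θ/(1+t^2*sin θ^2))
        = ∫ t in (0:ℝ)..x, ∫ θ in (0:ℝ)..(π/2), 2*t*sin θ/(1+t^2*sin θ^2) := by
    simp_rw [intervalIntegral.integral_of_le hπ, intervalIntegral.integral_of_le hx]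
    apply MeasureTheory.integral_integral_swap
    rw [Measure.prod_restrict]
    have h2 : MeasureTheory.IntegrableOn
        (Function.uncurry fun θ t : ℝ => 2*t*sin θ/(1+t^2*sin θ^2))
        (Set.Icc (0:ℝ) (π/2) ×ˢ Set.Icc (0:ℝ) x) (volume.prod volume) :=
      hcont.continuousOn.integrableOn_compact (isCompact_Icc.prod isCompact_Icc)
    exact h2.mono_set (Set.prod_mono Set.Ioc_subset_Icc_self Set.Ioc_subset_Icc_self)
  rw [hswap]
  have h3 : Set.EqOn (fun t : ℝ => ∫ θ in (0:ℝ)..(π/2), 2*t*sin θ/(1+t^2*sin θ^2))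
      (fun t : ℝ => 2 * (arsinh t / √(1+t^2))) (Set.uIcc (0:ℝ) x) := by
    intro t _
    simp only
    rw [← ftc_theta t, ← intervalIntegral.integral_const_mul]
    congr 1
    ext θ
    ring
  rw [intervalIntegral.integral_congr h3]
  have key : ∀ t ∈ Set.uIcc (0:ℝ) x,
      HasDerivAt (fun t : ℝ => arsinh t ^ 2) (2 * (arsinh t / √(1+t^2))) t := by
    intro t _
    have h := (Real.hasDerivAt_arsinh t).pow 2
    refine h.congr_deriv (Eq.symm ?_)
    rw [div_eq_mul_inv]
    push_cast
    ring
  rw [intervalIntegral.integral_eq_sub_of_hasDerivAt key (by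
    apply Continuous.intervalIntegrable
    apply Continuous.mul continuous_const
    refine Continuous.div (Real.continuous_arsinh) (by fun_prop) (fun t => by positivity))]
  simp [Real.arsinh_zero]

open Real MeasureTheory intervalIntegral in
private lemma wallis (n : ℕ) :
    (∫ θ in (0:ℝ)..(π/2), sin θ^(2*n+1)) * (∫ θ in (0:ℝ)..(π/2), cos θ^(2*n+2))
      = π/(4*(n+1)) := by
  induction n with
  | zero =>
    norm_num [integral_sin, integral_cos_sq]
    ring
  | succ k ih =>
    have e1 : 2*(k+1)+1 = (2*k+1)+2 := by ring
    have e2 : 2*(k+1)+2 = (2*k+2)+2 := by ring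
    rw [e1, e2, integral_sin_pow, integral_cos_pow]
    set S := ∫ x in (0:ℝ)..(π/2), sin x ^ (2*k+1) with hS
    set C := ∫ x in (0:ℝ)..(π/2), cos x ^ (2*k+2) with hC
    simp only [Real.sin_pi_div_two, Real.cos_pi_div_two, Real.sin_zero, Real.cos_zero,
      zero_pow (by omega : 2*k+1+1 ≠ 0), zero_pow (by omega : 2*k+2+1 ≠ 0), one_pow,
      mul_zero, mul_one, zero_mul, sub_zero, zero_sub, zero_div, zero_add, neg_zero]
    push_cast
    have h4 : (4:ℝ)*((k:ℝ)+1) ≠ 0 := by positivity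
    rw [eq_div_iff h4] at ih
    have h3 : (2*(k:ℝ)+1+2) ≠ 0 := by positivity
    have h5 : (2*(k:ℝ)+2+2) ≠ 0 := by positivity
    have h6 : (4:ℝ)*((k:ℝ)+1+1) ≠ 0 := by positivity
    field_simp
    linear_combination (2*(2*(k:ℝ)+3)) * ih

open Real MeasureTheory intervalIntegral in
private lemma Jval (n : ℕ) :
    ∫ x in (0:ℝ)..1, x^(2*n+1) * arccos x
      = (∫ θ in (0:ℝ)..(π/2), cos θ^(2*n+2)) / (2*n+2) := by
  have hg : Continuous fun x : ℝ => x^(2*n+1) * arccos x :=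
    (continuous_pow _).mul Real.continuous_arccos
  have hsub := intervalIntegral.integral_comp_smul_deriv
      (a := π/2) (b := 0) (f := Real.cos) (f' := fun θ => -Real.sin θ)
      (g := fun x : ℝ => x^(2*n+1) * arccos x)
      (fun θ _ => Real.hasDerivAt_cos θ) (by fun_prop) hg
  rw [Real.cos_pi_div_two, Real.cos_zero] at hsub
  rw [← hsub, intervalIntegral.integral_symm, ← intervalIntegral.integral_neg]
  have hcongr : Set.EqOn
      (fun θ : ℝ => -((fun θ => -Real.sin θ) θ • ((fun x : ℝ => x^(2*n+1) * arccos x) ∘ Real.cos) θ))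
      (fun θ : ℝ => (θ * Real.cos θ^(2*n+1) * Real.sin θ - Real.cos θ^(2*n+2)/(2*n+2))
            + Real.cos θ^(2*n+2)/(2*n+2))
      (Set.uIcc (0:ℝ) (π/2)) := by
    intro θ hθ
    rw [Set.uIcc_of_le (by positivity)] at hθ
    have h1 : arccos (Real.cos θ) = θ :=
      Real.arccos_cos hθ.1 (hθ.2.trans (by linarith [Real.pi_pos]))
    simp only [smul_eq_mul, Function.comp]
    rw [h1]
    ring
  rw [intervalIntegral.integral_congr hcongr, intervalIntegral.integral_add]
  · have hder : ∀ θ ∈ Set.uIcc (0:ℝ) (π/2),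
        HasDerivAt (fun θ : ℝ => -(θ * Real.cos θ^(2*n+2)) / (2*n+2))
          (θ * Real.cos θ^(2*n+1) * Real.sin θ - Real.cos θ^(2*n+2)/(2*n+2)) θ := by
      intro θ _
      have h0 : HasDerivAt (fun θ : ℝ => Real.cos θ^(2*n+2))
          ((2*n+2 : ℕ) * Real.cos θ^(2*n+1) * (-Real.sin θ)) θ := by
        exact ((Real.hasDerivAt_cos θ).pow (2*n+2)).congr_deriv (by simp)
      have h1 : HasDerivAt (fun θ : ℝ => θ * Real.cos θ^(2*n+2))
          (1 * Real.cos θ^(2*n+2) + θ * ((2*n+2 : ℕ) * Real.cos θ^(2*n+1) * (-Real.sin θ))) θ :=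
        (hasDerivAt_id θ).mul h0
      have h2 := (h1.neg).div_const ((2:ℝ)*n+2)
      refine h2.congr_deriv (Eq.symm ?_)
      have : ((2:ℝ)*n+2) ≠ 0 := by positivity
      push_cast
      field_simp
      ring
    rw [intervalIntegral.integral_eq_sub_of_hasDerivAt hder (by
      apply Continuous.intervalIntegrable; fun_prop)]
    rw [intervalIntegral.integral_div]
    norm_num [Real.cos_pi_div_two, zero_pow]
  · apply Continuous.intervalIntegrable; fun_prop
  · apply Continuous.intervalIntegrable; fun_prop

open Real MeasureTheory intervalIntegral in
private lemma hasSum_log_one_add {y : ℝ} (hy : |y| < 1) :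
    HasSum (fun n : ℕ => (-1:ℝ)^n * y^(n+1)/(n+1)) (log (1+y)) := by
  have h := (Real.hasSum_pow_div_log_of_abs_lt_one (x := -y) (by rwa [abs_neg])).neg
  rw [sub_neg_eq_add] at h
  have heq : (fun n : ℕ => (-1:ℝ)^n * y^(n+1)/(n+1)) = fun n : ℕ => -((-y)^(n+1)/((n:ℝ)+1)) := by
    funext n
    rw [show ((-y):ℝ)^(n+1) = (-1)^(n+1)*y^(n+1) from neg_pow y (n+1)]
    ring
  rw [heq]
  simpa using h

open Real MeasureTheory intervalIntegral in
private lemma arsinhInnerSum (x : ℝ) (hx0 : 0 < x) (hx1 : x < 1) :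
    arsinh x ^2 * arccos x / x
      = ∑' n:ℕ, (-1:ℝ)^n * (arccos x * x^(2*n+1)
          * (∫ θ in (0:ℝ)..(π/2), sin θ^(2*n+1)) / (n+1)) := by
  have hπ2 : (0:ℝ) ≤ π/2 := by positivity
  have hx2 : x^2 < 1 := by nlinarith
  set c : ℕ → ℝ := fun n => (-1:ℝ)^n * (arccos x * x^(2*n+1) / (n+1)) with hc
  set F : ℕ → ℝ → ℝ := fun n θ => c n * sin θ^(2*n+1) with hF
  have hFint : ∀ n, IntegrableOn (F n) (Set.Ioc 0 (π/2)) volume := fun n =>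
    (Continuous.integrableOn_Ioc (by fun_prop))
  have harccos_le : arccos x ≤ π := Real.arccos_le_pi x
  have harccos_nonneg : 0 ≤ arccos x := Real.arccos_nonneg x
  have hFsum : Summable fun n => ∫ θ in Set.Ioc (0:ℝ) (π/2), ‖F n θ‖ := by
    apply Summable.of_nonneg_of_le
        (fun n => integral_nonneg (fun θ => norm_nonneg _))
        (fun n => ?_)
        (Summable.mul_left (π * (π/2) * x)
          (summable_geometric_of_lt_one (by positivity) hx2))
    have hb : ∀ θ ∈ Set.Ioc (0:ℝ) (π/2), ‖F n θ‖ ≤ π * x^(2*n+1) := by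
      intro θ hθ
      have hs0 : 0 ≤ sin θ := Real.sin_nonneg_of_nonneg_of_le_pi hθ.1.le
        (hθ.2.trans (by linarith [Real.pi_pos]))
      have hs1 : sin θ ≤ 1 := Real.sin_le_one θ
      have hxp : (0:ℝ) ≤ x^(2*n+1) := by positivity
      rw [hF, hc]
      simp only [norm_mul, norm_pow, norm_neg, norm_one, one_pow, Real.norm_eq_abs]
      rw [abs_of_nonneg hs0,
        abs_of_nonneg (by positivity : (0:ℝ) ≤ arccos x * x^(2*n+1) / (↑n+1)), one_mul]
      have h1 : arccos x * x^(2*n+1) / (↑n+1) * sin θ^(2*n+1)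
          ≤ arccos x * x^(2*n+1) / (↑n+1) * 1 :=
        mul_le_mul_of_nonneg_left (pow_le_one₀ hs0 hs1) (by positivity)
      have h2 : arccos x * x^(2*n+1) / ((n:ℝ)+1) ≤ arccos x * x^(2*n+1) :=
        div_le_self (by positivity) (by norm_num)
      have h3 : arccos x * x^(2*n+1) ≤ π * x^(2*n+1) :=
        mul_le_mul_of_nonneg_right harccos_le hxp
      linarith
    calc (∫ θ in Set.Ioc (0:ℝ) (π/2), ‖F n θ‖)
        ≤ ∫ θ in Set.Ioc (0:ℝ) (π/2), π * x^(2*n+1) := by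
          apply setIntegral_mono_on (hFint n).norm ((integrableOn_const_iff (C := π * x^(2*n+1))).mpr ?_)
            measurableSet_Ioc hb
          right
          rw [Real.volume_Ioc]
          exact ENNReal.ofReal_lt_top
      _ = π * (π/2) * x * (x^2)^n := by
          rw [setIntegral_const, Real.volume_real_Ioc, smul_eq_mul,
            max_eq_left (by linarith [Real.pi_pos])]
          rw [pow_succ, pow_mul]
          ring
  have hexch := MeasureTheory.integral_tsum_of_summable_integral_norm hFint hFsum
  have hae : ∀ θ ∈ Set.Ioo (0:ℝ) (π/2),
      (fun θ => (arccos x / x) * (log (1 + x^2*sin θ^2) / sin θ)) θ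
        = (fun θ => ∑' n, F n θ) θ := by
    intro θ hθ
    have hs_pos : 0 < sin θ :=
      Real.sin_pos_of_pos_of_lt_pi hθ.1 (hθ.2.trans (by linarith [Real.pi_pos]))
    have hy : |x^2 * sin θ^2| < 1 := by
      rw [abs_of_nonneg (by positivity)]
      have hsq : sin θ^2 ≤ 1 := pow_le_one₀ hs_pos.le (Real.sin_le_one θ)
      nlinarith [hsq, sq_nonneg x]
    have h := (hasSum_log_one_add hy).mul_left (arccos x / (x * sin θ))
    have heq : (fun n : ℕ => (arccos x / (x * sin θ))
        * ((-1:ℝ)^n * (x^2*sin θ^2)^(n+1)/(n+1))) = fun n => F n θ := by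
      funext n
      rw [hF, hc]
      simp only
      rw [mul_pow, ← pow_mul, ← pow_mul]
      have hn : ((n:ℝ)+1) ≠ 0 := by positivity
      field_simp
      ring
    rw [heq] at h
    simp only
    rw [h.tsum_eq]
    field_simp
  calc arsinh x^2 * arccos x / x = (arccos x / x) * arsinh x ^2 := by ring
    _ = (arccos x / x) * ∫ θ in (0:ℝ)..(π/2), log (1 + x^2 * sin θ^2) / sin θ := by
        rw [arsinh_sq_eq x hx0.le]
    _ = (arccos x / x) * ∫ θ in Set.Ioc (0:ℝ) (π/2), log (1 + x^2 * sin θ^2) / sin θ := by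
        rw [intervalIntegral.integral_of_le hπ2]
    _ = ∫ θ in Set.Ioc (0:ℝ) (π/2), (arccos x / x) * (log (1 + x^2 * sin θ^2) / sin θ) := by
        rw [MeasureTheory.integral_const_mul]
    _ = ∫ θ in Set.Ioo (0:ℝ) (π/2), (arccos x / x) * (log (1 + x^2 * sin θ^2) / sin θ) := by
        rw [MeasureTheory.integral_Ioc_eq_integral_Ioo]
    _ = ∫ θ in Set.Ioo (0:ℝ) (π/2), ∑' n, F n θ :=
        setIntegral_congr_fun measurableSet_Ioo hae
    _ = ∫ θ in Set.Ioc (0:ℝ) (π/2), ∑' n, F n θ := by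
        rw [← MeasureTheory.integral_Ioc_eq_integral_Ioo]
    _ = ∑' n, ∫ θ in Set.Ioc (0:ℝ) (π/2), F n θ := hexch.symm
    _ = ∑' n:ℕ, (-1:ℝ)^n * (arccos x * x^(2*n+1)
          * (∫ θ in (0:ℝ)..(π/2), sin θ^(2*n+1)) / (n+1)) := by
        apply tsum_congr
        intro n
        rw [hF, hc]
        simp only
        rw [MeasureTheory.integral_const_mul, ← intervalIntegral.integral_of_le hπ2]
        ring

open Real MeasureTheory intervalIntegral in
private lemma I_val :
    ∫ x in (0:ℝ)..1, arsinh x ^2 * arccos x / x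
      = π/8 * ∑' n:ℕ, (-1:ℝ)^n / ((n:ℝ)+1)^3 := by
  have hπ2 : (0:ℝ) ≤ π/2 := by positivity
  set s : ℕ → ℝ := fun n => ∫ θ in (0:ℝ)..(π/2), sin θ^(2*n+1) with hs
  have hs0 : ∀ n, 0 ≤ s n := by
    intro n
    apply intervalIntegral.integral_nonneg hπ2
    intro θ hθ
    have : 0 ≤ sin θ := Real.sin_nonneg_of_nonneg_of_le_pi hθ.1
      (hθ.2.trans (by linarith [Real.pi_pos]))
    positivity
  set G : ℕ → ℝ → ℝ := fun n x => (-1:ℝ)^n * (s n/(n+1)) * (x^(2*n+1) * arccos x) with hG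
  have hGint : ∀ n, IntegrableOn (G n) (Set.Ioc (0:ℝ) 1) volume := fun n =>
    Continuous.integrableOn_Ioc (by
      apply Continuous.mul continuous_const
      exact (continuous_pow _).mul Real.continuous_arccos)
  -- value of each integral
  have hIval : ∀ n : ℕ, ∫ x in Set.Ioc (0:ℝ) 1, G n x
      = (-1:ℝ)^n * (π/(8*((n:ℝ)+1)^3)) := by
    intro n
    rw [← intervalIntegral.integral_of_le zero_le_one, hG]
    simp only
    rw [intervalIntegral.integral_const_mul, Jval]
    have hn : ((n:ℝ)+1) ≠ 0 := by positivity
    set Cn := ∫ θ in (0:ℝ)..(π/2), cos θ^(2*n+2) with hCn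
    have hw : s n * Cn = π/(4*((n:ℝ)+1)) := wallis n
    calc (-1:ℝ)^n * (s n/((n:ℝ)+1)) * (Cn/(2*(n:ℝ)+2))
        = (-1)^n * ((s n * Cn) * (1/(((n:ℝ)+1)*(2*(n:ℝ)+2)))) := by
          field_simp
      _ = (-1)^n * (π/(8*((n:ℝ)+1)^3)) := by
          rw [hw]
          field_simp
          try ring
          try simp
  -- norm integrals
  have hnorm : ∀ n : ℕ, (∫ x in Set.Ioc (0:ℝ) 1, ‖G n x‖) = π/(8*((n:ℝ)+1)^3) := by
    intro n
    have heq : Set.EqOn (fun x => ‖G n x‖) (fun x => (s n/(n+1)) * (x^(2*n+1) * arccos x))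
        (Set.Ioc (0:ℝ) 1) := by
      intro x hx
      have h1 : 0 ≤ arccos x := Real.arccos_nonneg x
      have h2 : (0:ℝ) ≤ x^(2*n+1) := pow_nonneg hx.1.le _
      have h3 : 0 ≤ s n := hs0 n
      simp only [hG, Real.norm_eq_abs, abs_mul, abs_pow, abs_neg, abs_one, one_pow, one_mul]
      rw [abs_of_nonneg (by positivity : (0:ℝ) ≤ s n/(↑n+1)),
        abs_of_nonneg hx.1.le, abs_of_nonneg h1]
    rw [setIntegral_congr_fun measurableSet_Ioc heq]
    rw [MeasureTheory.integral_const_mul, ← intervalIntegral.integral_of_le zero_le_one, Jval]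
    have hn : ((n:ℝ)+1) ≠ 0 := by positivity
    set Cn := ∫ θ in (0:ℝ)..(π/2), cos θ^(2*n+2) with hCn
    have hw : s n * Cn = π/(4*((n:ℝ)+1)) := wallis n
    calc (s n/((n:ℝ)+1)) * (Cn/(2*(n:ℝ)+2))
        = (s n * Cn) * (1/(((n:ℝ)+1)*(2*(n:ℝ)+2))) := by
          field_simp
      _ = π/(8*((n:ℝ)+1)^3) := by
          rw [hw]
          field_simp
          try ring
          try simp
  have hsummable : Summable fun n : ℕ => π/(8*((n:ℝ)+1)^3) := by
    have h1 : Summable fun n : ℕ => 1/((n:ℝ)+1)^3 := by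
      have := (summable_nat_add_iff (f := fun n : ℕ => 1/(n:ℝ)^3) 1).mpr
        (Real.summable_one_div_nat_pow.mpr (by norm_num))
      apply this.congr
      intro n
      push_cast
      ring
    apply (h1.mul_left (π/8)).congr
    intro n
    rw [div_mul_div_comm, mul_one]
  have hGsum : Summable fun n => ∫ x in Set.Ioc (0:ℝ) 1, ‖G n x‖ := by
    apply hsummable.congr
    intro n
    rw [hnorm n]
  have hexch := MeasureTheory.integral_tsum_of_summable_integral_norm hGint hGsum
  have hae : ∀ x ∈ Set.Ioo (0:ℝ) 1,
      (fun x => arsinh x ^2 * arccos x / x) x = (fun x => ∑' n, G n x) x := by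
    intro x hx
    simp only
    rw [arsinhInnerSum x hx.1 hx.2]
    apply tsum_congr
    intro n
    rw [hG]
    ring
  calc ∫ x in (0:ℝ)..1, arsinh x ^2 * arccos x / x
      = ∫ x in Set.Ioc (0:ℝ) 1, arsinh x ^2 * arccos x / x :=
        intervalIntegral.integral_of_le zero_le_one
    _ = ∫ x in Set.Ioo (0:ℝ) 1, arsinh x ^2 * arccos x / x :=
        MeasureTheory.integral_Ioc_eq_integral_Ioo
    _ = ∫ x in Set.Ioo (0:ℝ) 1, ∑' n, G n x :=
        setIntegral_congr_fun measurableSet_Ioo hae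
    _ = ∫ x in Set.Ioc (0:ℝ) 1, ∑' n, G n x :=
        MeasureTheory.integral_Ioc_eq_integral_Ioo.symm
    _ = ∑' n, ∫ x in Set.Ioc (0:ℝ) 1, G n x := hexch.symm
    _ = ∑' n : ℕ, π/8 * ((-1:ℝ)^n / ((n:ℝ)+1)^3) := by
        apply tsum_congr
        intro n
        rw [hIval n]
        have hn : ((n:ℝ)+1) ≠ 0 := by positivity
        field_simp
    _ = π/8 * ∑' n:ℕ, (-1:ℝ)^n / ((n:ℝ)+1)^3 := tsum_mul_left

open Real in
private lemma eta_val :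
    ∑' n:ℕ, ((-1:ℝ)^n / ((n:ℝ)+1)^3) = 3/4 * ∑' n:ℕ, 1/((n:ℝ)+1)^3 := by
  set g : ℕ → ℝ := fun n => 1/((n:ℝ)+1)^3 with hgdef
  set f : ℕ → ℝ := fun n => (-1:ℝ)^n/((n:ℝ)+1)^3 with hfdef
  have hg : Summable g := by
    have := (summable_nat_add_iff (f := fun n : ℕ => 1/(n:ℝ)^3) 1).mpr
      (Real.summable_one_div_nat_pow.mpr (by norm_num))
    apply this.congr
    intro n
    push_cast
    ring
  have hf : Summable f := by
    apply Summable.of_abs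
    apply hg.congr
    intro n
    rw [hfdef, hgdef]
    simp only [abs_div, abs_pow, abs_neg, abs_one, one_pow]
    rw [abs_of_nonneg (by positivity : (0:ℝ) ≤ (n:ℝ)+1)]
  have h2 : Function.Injective (fun k : ℕ => 2*k) := fun a b h => by simpa using h
  have h2' : Function.Injective (fun k : ℕ => 2*k+1) := fun a b h => by simpa using h
  have hfe : Summable (fun k : ℕ => f (2*k)) := hf.comp_injective h2
  have hfo : Summable (fun k : ℕ => f (2*k+1)) := hf.comp_injective h2'
  have hge : Summable (fun k : ℕ => g (2*k)) := hg.comp_injective h2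
  have hgo : Summable (fun k : ℕ => g (2*k+1)) := hg.comp_injective h2'
  have hsplitf := tsum_even_add_odd hfe hfo
  have hsplitg := tsum_even_add_odd hge hgo
  have he : ∑' k:ℕ, f (2*k) = ∑' k:ℕ, g (2*k) := by
    apply tsum_congr
    intro k
    rw [hfdef, hgdef]
    simp [pow_mul]
  have ho : ∑' k:ℕ, f (2*k+1) = -∑' k:ℕ, g (2*k+1) := by
    rw [← tsum_neg]
    apply tsum_congr
    intro k
    rw [hfdef, hgdef]
    simp only [pow_succ, pow_mul, neg_one_sq, one_pow, one_mul]
    push_cast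
    ring
  have h8 : ∑' k:ℕ, g (2*k+1) = 1/8 * ∑' n, g n := by
    rw [← tsum_mul_left]
    apply tsum_congr
    intro k
    rw [hgdef]
    simp only
    have : ((2*k+1:ℕ):ℝ)+1 = 2*((k:ℝ)+1) := by push_cast; ring
    rw [this]
    field_simp
    ring
  have := hsplitf
  rw [he, ho, h8] at this
  have hge' : ∑' k:ℕ, g (2*k) = ∑' n, g n - 1/8 * ∑' n, g n := by
    rw [← h8]
    linarith [hsplitg]
  rw [hge'] at this
  linarith [this]

private lemma zeta3 : riemannZeta 3 = ((∑' n:ℕ, 1/((n:ℝ)+1)^3 : ℝ) : ℂ) := by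
  rw [zeta_eq_tsum_one_div_nat_add_one_cpow (by norm_num : 1 < (3:ℂ).re)]
  rw [Complex.ofReal_tsum]
  apply tsum_congr
  intro n
  have : ((n:ℂ) + 1) ^ (3:ℂ) = ((n:ℂ)+1)^(3:ℕ) := by
    rw [show (3:ℂ) = ((3:ℕ):ℂ) by norm_num, Complex.cpow_natCast]
  rw [this]
  push_cast
  ring

open Real in
theorem zeta_three_eq_arsinh_sq_arccos_integral :
    riemannZeta 3 =
      ((32 / (3 * π)) * ∫ x in (0:ℝ)..1, (arsinh x) ^ 2 * arccos x / x : ℝ) := by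
  have hπ : (π:ℝ) ≠ 0 := Real.pi_ne_zero
  rw [zeta3, I_val, eta_val]
  norm_cast
  field_simp
  ring
end

section
/- For every real t with 0 ≤ t ≤ 1, ∑_{n=0}^∞ t^{2n+1}/(2n+1)³ = ∫₀¹ (arcsin(t·x) · arccos x)/x dx, where the integral is taken over the real interval [0,1]. -/
open Real Finset Set MeasureTheory intervalIntegral


noncomputable def bb (n : ℕ) : ℝ := ∏ i ∈ Finset.range n, (2 * (i : ℝ) + 1) / (2 * i + 2)

lemma bb_zero : bb 0 = 1 := by simp [bb]

lemma bb_succ (n : ℕ) : bb (n + 1) = bb n * ((2 * n + 1) / (2 * n + 2)) := by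
  simp only [bb, Finset.prod_range_succ]

lemma bb_pos (n : ℕ) : 0 < bb n := by
  apply Finset.prod_pos
  intro i _
  positivity

lemma bb_le_one (n : ℕ) : bb n ≤ 1 := by
  apply Finset.prod_le_one
  · intro i _; positivity
  · intro i _
    rw [div_le_one (by positivity)]
    linarith

lemma summable_g {y : ℝ} (hy : |y| < 1) : Summable (fun n : ℕ => bb n * y ^ (2 * n)) := by
  apply Summable.of_norm_bounded (g := fun n : ℕ => (y ^ 2) ^ n)
  · exact summable_geometric_of_lt_one (by positivity) (by nlinarith [abs_nonneg y, sq_abs y])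
  · intro n
    rw [Real.norm_eq_abs, abs_mul, abs_of_pos (bb_pos n), pow_mul, abs_pow, abs_sq]
    calc bb n * (y ^ 2) ^ n ≤ 1 * (y ^ 2) ^ n := by
          apply mul_le_mul_of_nonneg_right (bb_le_one n) (by positivity)
      _ = (y ^ 2) ^ n := one_mul _


noncomputable def gser (y : ℝ) : ℝ := ∑' n : ℕ, bb n * y ^ (2 * n)

lemma dg_norm_bound {r : ℝ} (h0r : 0 < r) {z : ℝ} (hz' : |z| ≤ r) (n : ℕ) :
    ‖bb n * (↑(2 * n) * z ^ (2 * n - 1))‖ ≤ 2 / r * ((n : ℝ) * (r ^ 2) ^ n) := by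
  rw [norm_eq_abs, abs_mul, abs_mul, abs_of_pos (bb_pos n)]
  rcases Nat.eq_zero_or_pos n with rfl | hn
  · simp
  · have h1 : |z| ^ (2 * n - 1) ≤ r ^ (2 * n - 1) :=
      pow_le_pow_left₀ (abs_nonneg z) hz' _
    have h2 : (r : ℝ) ^ (2 * n - 1) = r ^ (2 * n) / r := by
      rw [eq_div_iff (ne_of_gt h0r), ← pow_succ]
      congr 1
      omega
    have hb := bb_le_one n
    have hbp := bb_pos n
    rw [Nat.abs_cast, abs_pow]
    calc bb n * (((2 * n : ℕ) : ℝ) * |z| ^ (2 * n - 1))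
        ≤ 1 * (((2 * n : ℕ) : ℝ) * r ^ (2 * n - 1)) :=
          mul_le_mul hb (mul_le_mul_of_nonneg_left h1 (by positivity))
            (by positivity) one_pos.le
      _ = (2 / r) * ((n : ℝ) * (r ^ 2) ^ n) := by
          rw [one_mul, h2, ← pow_mul]
          push_cast
          field_simp

lemma summable_u {r : ℝ} (h0 : 0 < r) (h1 : r < 1) :
    Summable (fun n : ℕ => (2 / r) * ((n : ℝ) * (r ^ 2) ^ n)) := by
  have hgeo : ‖r ^ 2‖ < 1 := by
    rw [norm_eq_abs, abs_of_nonneg (by positivity : (0:ℝ) ≤ r ^ 2)]; nlinarith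
  have hs : Summable (fun n : ℕ => (n : ℝ) * (r ^ 2) ^ n) := by
    simpa using summable_pow_mul_geometric_of_norm_lt_one 1 hgeo
  exact hs.mul_left _

lemma summable_dg {y : ℝ} (hy : |y| < 1) :
    Summable (fun n : ℕ => bb n * (↑(2 * n) * y ^ (2 * n - 1))) := by
  set r : ℝ := (1 + |y|) / 2 with hr
  have h0r : 0 < r := by positivity
  have hyr : |y| ≤ r := by rw [hr]; linarith
  have hr1 : r < 1 := by rw [hr]; linarith
  exact Summable.of_norm_bounded (summable_u h0r hr1) (fun n => dg_norm_bound h0r hyr n)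

lemma hasDerivAt_gser {y : ℝ} (hy : y ∈ Ioo (-1 : ℝ) 1) :
    HasDerivAt gser (∑' n : ℕ, bb n * (↑(2 * n) * y ^ (2 * n - 1))) y := by
  set r : ℝ := (1 + |y|) / 2 with hr
  have hay : |y| < 1 := abs_lt.2 ⟨hy.1, hy.2⟩
  have h0r : 0 < r := by positivity
  have hyr : |y| < r := by rw [hr]; linarith
  have hr1 : r < 1 := by rw [hr]; linarith
  unfold gser
  apply hasDerivAt_tsum_of_isPreconnected (summable_u h0r hr1) (t := Ioo (-r) r) (y₀ := y)
    (g := fun n z => bb n * z ^ (2 * n))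
    (g' := fun n z => bb n * (↑(2 * n) * z ^ (2 * n - 1)))
  · exact isOpen_Ioo
  · exact isPreconnected_Ioo
  · intro n z _
    exact (hasDerivAt_pow (2 * n) z).const_mul (bb n)
  · intro n z hz
    exact dg_norm_bound h0r (le_of_lt (abs_lt.2 ⟨hz.1, hz.2⟩)) n
  · rw [Set.mem_Ioo]; exact abs_lt.1 hyr
  · exact summable_g hay
  · rw [Set.mem_Ioo]; exact abs_lt.1 hyr


lemma deriv_identity {y : ℝ} (hy : |y| < 1) :
    (1 - y ^ 2) * (∑' n : ℕ, bb n * (↑(2 * n) * y ^ (2 * n - 1))) = y * gser y := by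
  have sdg := summable_dg hy
  have sg := summable_g hy
  have sB : Summable (fun n : ℕ => bb n * (↑(2 * n) * y ^ (2 * n + 1))) := by
    apply (sdg.mul_left (y ^ 2)).congr
    intro n
    rcases Nat.eq_zero_or_pos n with rfl | hn
    · simp
    · have he : 2 * n - 1 + 2 = 2 * n + 1 := by omega
      rw [← he, pow_add]
      ring
  have sC : Summable (fun n : ℕ => bb n * y ^ (2 * n + 1)) := by
    apply (sg.mul_left y).congr
    intro n
    rw [pow_succ]
    ring
  have hA : (∑' n : ℕ, bb n * (↑(2 * n) * y ^ (2 * n - 1)))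
      = (∑' n : ℕ, bb n * (↑(2 * n) * y ^ (2 * n + 1))) + ∑' n : ℕ, bb n * y ^ (2 * n + 1) := by
    rw [sdg.tsum_eq_zero_add]
    simp only [Nat.mul_zero, Nat.cast_zero, zero_mul, mul_zero, zero_add]
    rw [← sB.tsum_add sC]
    apply tsum_congr
    intro n
    have he : 2 * (n + 1) - 1 = 2 * n + 1 := by omega
    rw [he, bb_succ]
    have h2 : (2 * (n : ℝ) + 2) ≠ 0 := by positivity
    push_cast
    field_simp
  have hB : y ^ 2 * (∑' n : ℕ, bb n * (↑(2 * n) * y ^ (2 * n - 1)))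
      = ∑' n : ℕ, bb n * (↑(2 * n) * y ^ (2 * n + 1)) := by
    rw [← tsum_mul_left]
    apply tsum_congr
    intro n
    rcases Nat.eq_zero_or_pos n with rfl | hn
    · simp
    · have he : 2 * n - 1 + 2 = 2 * n + 1 := by omega
      rw [← he, pow_add]
      ring
  have hC : y * gser y = ∑' n : ℕ, bb n * y ^ (2 * n + 1) := by
    unfold gser
    rw [← tsum_mul_left]
    apply tsum_congr
    intro n
    rw [pow_succ]
    ring
  calc (1 - y ^ 2) * (∑' n : ℕ, bb n * (↑(2 * n) * y ^ (2 * n - 1)))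
      = (∑' n : ℕ, bb n * (↑(2 * n) * y ^ (2 * n - 1)))
        - y ^ 2 * (∑' n : ℕ, bb n * (↑(2 * n) * y ^ (2 * n - 1))) := by ring
    _ = y * gser y := by rw [hB, hA, hC]; ring

lemma hasDerivAt_k {z : ℝ} (hz : z ∈ Ioo (-1 : ℝ) 1) :
    HasDerivAt (fun w => gser w * √(1 - w ^ 2)) 0 z := by
  have hz2 : (0:ℝ) < 1 - z ^ 2 := by nlinarith [hz.1, hz.2]
  have hsq : √(1 - z ^ 2) * √(1 - z ^ 2) = 1 - z ^ 2 := Real.mul_self_sqrt hz2.le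
  have hsqrt : (0:ℝ) < √(1 - z ^ 2) := Real.sqrt_pos.2 hz2
  have hinner : HasDerivAt (fun w : ℝ => 1 - w ^ 2) (-(2 * z)) z := by
    have := (hasDerivAt_pow 2 z).const_sub 1
    simpa using this
  have hs : HasDerivAt (fun w => √(1 - w ^ 2)) (-z / √(1 - z ^ 2)) z := by
    have := hinner.sqrt (ne_of_gt hz2)
    convert this using 1
    field_simp
  have hderiv := hasDerivAt_gser hz
  have hmul := hderiv.mul hs
  refine hmul.congr_deriv (Eq.symm ?_)
  have hid := deriv_identity (abs_lt.2 ⟨hz.1, hz.2⟩)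
  have e1 : gser z * (-z / √(1 - z ^ 2)) * √(1 - z ^ 2) = -(z * gser z) := by
    field_simp
  have key : ((∑' n : ℕ, bb n * (↑(2 * n) * z ^ (2 * n - 1))) * √(1 - z ^ 2)
      + gser z * (-z / √(1 - z ^ 2))) * √(1 - z ^ 2) = 0 := by
    rw [add_mul, mul_assoc, hsq, e1]
    linear_combination hid
  rcases mul_eq_zero.1 key with h | h
  · exact h.symm
  · exact absurd h (ne_of_gt hsqrt)

lemma gser_eq {y : ℝ} (hy : y ∈ Ioo (-1 : ℝ) 1) : gser y = 1 / √(1 - y ^ 2) := by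
  have h0 : (0:ℝ) ∈ Ioo (-1 : ℝ) 1 := by norm_num
  have hconst : gser y * √(1 - y ^ 2) = gser 0 * √(1 - 0 ^ 2) := by
    apply Convex.is_const_of_fderivWithin_eq_zero (𝕜 := ℝ) (convex_Ioo (-1 : ℝ) 1)
      (f := fun w => gser w * √(1 - w ^ 2))
    · intro x hx
      exact ((hasDerivAt_k hx).differentiableAt).differentiableWithinAt
    · intro x hx
      rw [fderivWithin_of_isOpen isOpen_Ioo hx, (hasDerivAt_k hx).hasFDerivAt.fderiv]
      ext
      simp
    · exact hy
    · exact h0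
  have hg0 : gser 0 = 1 := by
    unfold gser
    rw [tsum_eq_single 0]
    · simp [bb_zero]
    · intro n hn
      rw [zero_pow (by omega), mul_zero]
  rw [hg0] at hconst
  simp only [ne_eq, OfNat.ofNat_ne_zero, not_false_eq_true, zero_pow, sub_zero, Real.sqrt_one,
    mul_one] at hconst
  have hz2 : (0:ℝ) < 1 - y ^ 2 := by nlinarith [hy.1, hy.2]
  have hsqrt : (0:ℝ) < √(1 - y ^ 2) := Real.sqrt_pos.2 hz2
  rw [eq_div_iff (ne_of_gt hsqrt)]
  exact hconst

noncomputable def Gf (y : ℝ) : ℝ := ∑' n : ℕ, bb n / (2 * n + 1) * y ^ (2 * n + 1)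

lemma coef_bound (n : ℕ) : |bb n / (2 * (n : ℝ) + 1)| ≤ 1 := by
  rw [abs_div, abs_of_pos (bb_pos n), abs_of_pos (by positivity)]
  rw [div_le_one (by positivity)]
  have := bb_le_one n
  linarith [bb_le_one n, Nat.cast_nonneg (α := ℝ) n]

lemma summable_G {y : ℝ} (hy : |y| < 1) :
    Summable (fun n : ℕ => bb n / (2 * n + 1) * y ^ (2 * n + 1)) := by
  apply Summable.of_norm_bounded (g := fun n : ℕ => (y ^ 2) ^ n)
  · exact summable_geometric_of_lt_one (by positivity) (by nlinarith [abs_nonneg y, sq_abs y])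
  · intro n
    rw [Real.norm_eq_abs, abs_mul, abs_pow]
    calc |bb n / (2 * (n : ℝ) + 1)| * |y| ^ (2 * n + 1)
        ≤ 1 * |y| ^ (2 * n) := by
          apply mul_le_mul (coef_bound n) _ (by positivity) one_pos.le
          calc |y| ^ (2 * n + 1) ≤ |y| ^ (2 * n) * 1 := by
                rw [pow_succ]
                exact mul_le_mul_of_nonneg_left hy.le (by positivity)
            _ = |y| ^ (2 * n) := mul_one _
      _ = (y ^ 2) ^ n := by rw [one_mul, pow_mul, sq_abs]

lemma hasDerivAt_Gf {y : ℝ} (hy : y ∈ Ioo (-1 : ℝ) 1) : HasDerivAt Gf (gser y) y := by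
  set r : ℝ := (1 + |y|) / 2 with hr
  have hay : |y| < 1 := abs_lt.2 ⟨hy.1, hy.2⟩
  have h0r : 0 < r := by positivity
  have hyr : |y| < r := by rw [hr]; linarith
  have hr1 : r < 1 := by rw [hr]; linarith
  have hu : Summable (fun n : ℕ => (r ^ 2) ^ n) :=
    summable_geometric_of_lt_one (by positivity) (by nlinarith)
  unfold Gf gser
  apply hasDerivAt_tsum_of_isPreconnected hu (t := Ioo (-r) r) (y₀ := y)
    (g := fun n z => bb n / (2 * n + 1) * z ^ (2 * n + 1))
    (g' := fun n z => bb n * z ^ (2 * n))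
  · exact isOpen_Ioo
  · exact isPreconnected_Ioo
  · intro n z _
    have h := (hasDerivAt_pow (2 * n + 1) z).const_mul (bb n / (2 * n + 1))
    refine h.congr_deriv (Eq.symm ?_)
    have he : 2 * n + 1 - 1 = 2 * n := by omega
    rw [he]
    have h2 : (2 * (n : ℝ) + 1) ≠ 0 := by positivity
    push_cast
    field_simp
  · intro n z hz
    have hz' : |z| ≤ r := le_of_lt (abs_lt.2 ⟨hz.1, hz.2⟩)
    rw [Real.norm_eq_abs, abs_mul, abs_of_pos (bb_pos n), abs_pow]
    calc bb n * |z| ^ (2 * n) ≤ 1 * r ^ (2 * n) :=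
          mul_le_mul (bb_le_one n) (pow_le_pow_left₀ (abs_nonneg z) hz' _) (by positivity)
            one_pos.le
      _ = (r ^ 2) ^ n := by rw [one_mul, pow_mul]
  · rw [Set.mem_Ioo]; exact abs_lt.1 hyr
  · exact summable_G hay
  · rw [Set.mem_Ioo]; exact abs_lt.1 hyr

lemma Gf_eq_arcsin {y : ℝ} (hy : y ∈ Ioo (-1 : ℝ) 1) : Gf y = arcsin y := by
  have hk : ∀ z ∈ Ioo (-1 : ℝ) 1, HasDerivAt (fun w => Gf w - arcsin w) 0 z := by
    intro z hz
    have h1 := hasDerivAt_Gf hz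
    have hne1 : z ≠ -1 := by intro h; rw [h] at hz; exact absurd hz.1 (by norm_num)
    have hne2 : z ≠ 1 := by intro h; rw [h] at hz; exact absurd hz.2 (by norm_num)
    have h2 := Real.hasDerivAt_arcsin hne1 hne2
    have h3 := h1.sub h2
    refine h3.congr_deriv (Eq.symm ?_)
    rw [gser_eq hz]
    simp
  have h0 : (0:ℝ) ∈ Ioo (-1 : ℝ) 1 := by norm_num
  have hconst : Gf y - arcsin y = Gf 0 - arcsin 0 := by
    apply Convex.is_const_of_fderivWithin_eq_zero (𝕜 := ℝ) (convex_Ioo (-1 : ℝ) 1)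
      (f := fun w => Gf w - arcsin w)
    · intro x hx
      exact ((hk x hx).differentiableAt).differentiableWithinAt
    · intro x hx
      rw [fderivWithin_of_isOpen isOpen_Ioo hx, (hk x hx).hasFDerivAt.fderiv]
      ext
      simp
    · exact hy
    · exact h0
  have hG0 : Gf 0 = 0 := by
    unfold Gf
    have : ∀ n : ℕ, bb n / (2 * (n : ℝ) + 1) * (0:ℝ) ^ (2 * n + 1) = 0 := by
      intro n
      rw [zero_pow (by omega), mul_zero]
    rw [tsum_congr this, tsum_zero]
  rw [hG0, Real.arcsin_zero, sub_zero] at hconst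
  linarith [hconst]

lemma hasSum_arcsin {y : ℝ} (h0 : 0 ≤ y) (h1 : y < 1) :
    HasSum (fun n : ℕ => bb n / (2 * n + 1) * y ^ (2 * n + 1)) (arcsin y) := by
  have hy : y ∈ Ioo (-1 : ℝ) 1 := ⟨by linarith, h1⟩
  have hay : |y| < 1 := abs_lt.2 ⟨by linarith, h1⟩
  have hs := (summable_G hay).hasSum
  rwa [show (∑' n : ℕ, bb n / (2 * n + 1) * y ^ (2 * n + 1)) = Gf y from rfl,
    Gf_eq_arcsin hy] at hs

lemma sin_pow_half (n : ℕ) :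
    ∫ x in (0:ℝ)..(π/2), sin x ^ (2 * n + 1)
      = ∏ i ∈ Finset.range n, (2 * (i : ℝ) + 2) / (2 * i + 3) := by
  have hint : ∀ a b : ℝ, IntervalIntegrable (fun x => sin x ^ (2 * n + 1)) MeasureTheory.volume a b :=
    fun a b => (continuous_sin.pow _).intervalIntegrable a b
  have hsym : ∫ x in (π/2)..π, sin x ^ (2 * n + 1) = ∫ x in (0:ℝ)..(π/2), sin x ^ (2 * n + 1) := by
    have h := intervalIntegral.integral_comp_sub_left (a := (π/2 : ℝ)) (b := π)
      (fun x => sin x ^ (2 * n + 1)) π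
    simp only [sin_pi_sub] at h
    rw [sub_self, show π - π/2 = π/2 by ring] at h
    rw [h]
  have hadd : (∫ x in (0:ℝ)..(π/2), sin x ^ (2 * n + 1)) + ∫ x in (π/2)..π, sin x ^ (2 * n + 1)
      = ∫ x in (0:ℝ)..π, sin x ^ (2 * n + 1) :=
    intervalIntegral.integral_add_adjacent_intervals (hint 0 (π/2)) (hint (π/2) π)
  have hodd := integral_sin_pow_odd n
  rw [hsym] at hadd
  linarith [hadd, hodd]

lemma arccos_integral (n : ℕ) :
    ∫ x in (0:ℝ)..1, x ^ (2 * n) * arccos x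
      = (1 / (2 * (n : ℝ) + 1)) * ∏ i ∈ Finset.range n, (2 * (i : ℝ) + 2) / (2 * i + 3) := by
  -- substitution x = sin θ
  have hsub : ∫ x in (0:ℝ)..1, x ^ (2 * n) * arccos x
      = ∫ θ in (0:ℝ)..(π/2), cos θ • ((fun x => x ^ (2 * n) * arccos x) ∘ sin) θ := by
    rw [intervalIntegral.integral_comp_smul_deriv (f := sin) (f' := cos) (g := fun x => x ^ (2 * n) * arccos x)
      (fun x _ => Real.hasDerivAt_sin x) continuous_cos.continuousOn
      ((continuous_pow _).mul Real.continuous_arccos)]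
    rw [Real.sin_zero, Real.sin_pi_div_two]
  have hcongr : ∫ θ in (0:ℝ)..(π/2), cos θ • ((fun x => x ^ (2 * n) * arccos x) ∘ sin) θ
      = ∫ θ in (0:ℝ)..(π/2), (π/2 - θ) * (sin θ ^ (2 * n) * cos θ) := by
    apply intervalIntegral.integral_congr
    intro θ hθ
    rw [Set.uIcc_of_le (by positivity)] at hθ
    have h1 : arccos (sin θ) = π/2 - θ := by
      rw [Real.arccos, Real.arcsin_sin (by linarith [hθ.1, pi_pos.le]) (by linarith [hθ.2])]
    simp only [Function.comp_apply, smul_eq_mul, h1]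
    ring
  have hparts : ∫ θ in (0:ℝ)..(π/2), (π/2 - θ) * (sin θ ^ (2 * n) * cos θ)
      = (1 / (2 * (n : ℝ) + 1)) * ∫ θ in (0:ℝ)..(π/2), sin θ ^ (2 * n + 1) := by
    have h21 : (2 * (n : ℝ) + 1) ≠ 0 := by positivity
    have hu : ∀ θ ∈ Set.uIcc (0:ℝ) (π/2), HasDerivAt (fun θ : ℝ => π/2 - θ) (-1 : ℝ) θ := by
      intro θ _
      simpa using ((hasDerivAt_id θ).const_sub (π/2))
    have hv : ∀ θ ∈ Set.uIcc (0:ℝ) (π/2),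
        HasDerivAt (fun θ : ℝ => sin θ ^ (2 * n + 1) / (2 * n + 1))
          (sin θ ^ (2 * n) * cos θ) θ := by
      intro θ _
      have h := ((Real.hasDerivAt_sin θ).pow (2 * n + 1)).div_const (2 * (n : ℝ) + 1)
      refine h.congr_deriv (Eq.symm ?_)
      have he : 2 * n + 1 - 1 = 2 * n := by omega
      rw [he]
      push_cast
      field_simp
    have h := intervalIntegral.integral_mul_deriv_eq_deriv_mul hu hv
      (continuous_const.neg.intervalIntegrable _ _)
      (((continuous_sin.pow _).mul continuous_cos).intervalIntegrable _ _)
    rw [h]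
    have hrw : ∫ x in (0:ℝ)..(π/2), -1 * (sin x ^ (2 * n + 1) / (2 * (n : ℝ) + 1))
        = (-(1 / (2 * (n : ℝ) + 1))) * ∫ x in (0:ℝ)..(π/2), sin x ^ (2 * n + 1) := by
      rw [← intervalIntegral.integral_const_mul]
      apply intervalIntegral.integral_congr
      intro θ _
      ring
    rw [hrw]
    rw [Real.sin_zero, zero_pow (by omega : 2 * n + 1 ≠ 0)]
    ring
  rw [hsub, hcongr, hparts, sin_pow_half]

lemma coef_prod (n : ℕ) :
    bb n * ∏ i ∈ Finset.range n, (2 * (i : ℝ) + 2) / (2 * i + 3) = 1 / (2 * n + 1) := by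
  induction n with
  | zero => simp [bb_zero]
  | succ n ih =>
    rw [Finset.prod_range_succ, bb_succ]
    have h1 : (2 * (n : ℝ) + 1) ≠ 0 := by positivity
    have h2 : (2 * (n : ℝ) + 2) ≠ 0 := by positivity
    have h3 : (2 * (n : ℝ) + 3) ≠ 0 := by positivity
    push_cast
    field_simp at ih ⊢
    linear_combination (2 * (n:ℝ) + 3) * ih

open Real in
theorem odd_cubes_sum_eq_integral (t : ℝ) (ht0 : 0 ≤ t) (ht1 : t ≤ 1) :
    ∑' n : ℕ, t ^ (2 * n + 1) / (2 * n + 1 : ℝ) ^ 3 =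
      ∫ x in (0:ℝ)..1, arcsin (t * x) * arccos x / x := by
  set μ : Measure ℝ := volume.restrict (Set.Ioc (0:ℝ) 1) with hμ
  set F : ℕ → ℝ → ℝ := fun n x => bb n / (2 * n + 1) * t ^ (2 * n + 1) * (x ^ (2 * n) * arccos x)
    with hF
  have hFc : ∀ n, Continuous (F n) := fun n =>
    continuous_const.mul ((continuous_pow _).mul Real.continuous_arccos)
  have hFint : ∀ n, Integrable (F n) μ := fun n =>
    (hFc n).integrableOn_Ioc
  -- value of each integral
  have hval : ∀ n, ∫ x, F n x ∂μ = t ^ (2 * n + 1) / (2 * n + 1 : ℝ) ^ 3 := by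
    intro n
    have h1 : ∫ x, F n x ∂μ = ∫ x in (0:ℝ)..1, F n x := by
      rw [intervalIntegral.integral_of_le zero_le_one, hμ]
    rw [h1, hF]
    simp only
    rw [intervalIntegral.integral_const_mul, arccos_integral n]
    have h1 : (2 * (n : ℝ) + 1) ≠ 0 := by positivity
    have hc := coef_prod n
    field_simp at hc ⊢
    linear_combination t ^ (2 * n + 1) * hc
  have hFnonneg : ∀ n, ∀ x ∈ Set.Ioc (0:ℝ) 1, 0 ≤ F n x := by
    intro n x hx
    have h1 : 0 ≤ arccos x := Real.arccos_nonneg x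
    have hb := (bb_pos n).le
    exact mul_nonneg (mul_nonneg (by positivity) (pow_nonneg ht0 _))
      (mul_nonneg (pow_nonneg hx.1.le _) h1)
  have hnorm : ∀ n, ∫ x, ‖F n x‖ ∂μ = t ^ (2 * n + 1) / (2 * n + 1 : ℝ) ^ 3 := by
    intro n
    rw [← hval n]
    apply MeasureTheory.integral_congr_ae
    filter_upwards [ae_restrict_mem measurableSet_Ioc] with x hx
    exact Real.norm_of_nonneg (hFnonneg n x hx)
  have base : Summable (fun n : ℕ => 1 / ((n:ℝ) + 1) ^ 2) := by
    have h := Real.summable_one_div_nat_pow.mpr (by norm_num : 1 < 2)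
    have h2 := (summable_nat_add_iff 1).mpr h
    exact h2.congr (by intro n; push_cast; ring)
  have hsummable : Summable (fun n : ℕ => t ^ (2 * n + 1) / (2 * n + 1 : ℝ) ^ 3) := by
    apply Summable.of_nonneg_of_le (fun n => by positivity) (fun n => ?_) base
    have hn0 : (0:ℝ) ≤ (n : ℝ) := Nat.cast_nonneg n
    apply div_le_div₀ one_pos.le (pow_le_one₀ ht0 ht1) (by positivity)
    nlinarith [hn0, mul_nonneg hn0 hn0, mul_nonneg (mul_nonneg hn0 hn0) hn0]
  have hkey := MeasureTheory.hasSum_integral_of_summable_integral_norm hFint (by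
    simp_rw [hnorm]; exact hsummable)
  have hptwise : ∀ x ∈ Set.Ioc (0:ℝ) 1, (∑' n, F n x) = arcsin (t * x) * arccos x / x := by
    intro x hx
    rcases eq_or_lt_of_le hx.2 with h | h
    · subst h
      simp [hF, Real.arccos_one]
    · have hy0 : 0 ≤ t * x := mul_nonneg ht0 hx.1.le
      have hy1 : t * x < 1 := lt_of_le_of_lt (by nlinarith [hx.1.le] : t * x ≤ x) h
      have hs := (hasSum_arcsin hy0 hy1).mul_right (arccos x / x)
      have hxne : x ≠ 0 := ne_of_gt hx.1
      have heq : (fun n : ℕ => bb n / (2 * n + 1) * (t * x) ^ (2 * n + 1) * (arccos x / x))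
          = fun n => F n x := by
        funext n
        rw [hF]
        simp only
        rw [mul_pow]
        field_simp
        ring
      rw [heq] at hs
      rw [hs.tsum_eq, mul_div_assoc]
  have hINT : ∫ x, (∑' n, F n x) ∂μ = ∫ x in (0:ℝ)..1, arcsin (t * x) * arccos x / x := by
    rw [intervalIntegral.integral_of_le zero_le_one, hμ]
    exact setIntegral_congr_fun measurableSet_Ioc hptwise
  rw [← hINT, ← hkey.tsum_eq]
  exact tsum_congr fun n => (hval n).symm
end

section
/- For every real t with 0 ≤ t ≤ 1, (π/8) · ∑_{n=1}^∞ t^{2n}/n³ = ∫₀¹ ((arcsin(t·x))² · arccos x)/x dx, where the integral is taken over the real interval [0,1]. -/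
open Real

noncomputable def cc : ℕ → ℝ
  | 0 => 1
  | (m+1) => cc m * (2*m+2)/(2*m+3)

lemma cc_pos (m : ℕ) : 0 < cc m := by
  induction m with
  | zero => norm_num [cc]
  | succ k ih => rw [cc]; positivity

lemma cc_le_one (m : ℕ) : cc m ≤ 1 := by
  induction m with
  | zero => norm_num [cc]
  | succ k ih =>
    rw [cc, div_le_one (by positivity)]
    nlinarith [cc_pos k]

lemma cc_rec (m : ℕ) : (2*m+3 : ℝ) * cc (m+1) = (2*m+2) * cc m := by
  rw [cc]; field_simp

lemma cc_centralBinom (m : ℕ) :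
    cc m * (2*m+1) * (Nat.centralBinom m : ℝ) = 4 ^ m := by
  induction m with
  | zero => norm_num [cc, Nat.centralBinom]
  | succ k ih =>
    have h := Nat.succ_mul_centralBinom_succ k
    have h' : ((k:ℝ)+1) * (Nat.centralBinom (k+1) : ℝ) = 2*(2*k+1) * (Nat.centralBinom k : ℝ) := by
      exact_mod_cast congrArg (Nat.cast : ℕ → ℝ) h
    have hk1 : ((k:ℝ)+1) ≠ 0 := by positivity
    have hcb : (Nat.centralBinom (k+1) : ℝ) = 2*(2*k+1) * (Nat.centralBinom k : ℝ) / ((k:ℝ)+1) := by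
      field_simp [hk1]; linarith [h']
    have hrec : cc (k+1) = cc k * (2*k+2)/(2*k+3) := rfl
    rw [hrec, hcb, pow_succ, ← ih]
    push_cast
    field_simp
    ring

lemma summable_aux {r : ℝ} (hr0 : 0 ≤ r) (hr : r < 1) :
    Summable (fun m : ℕ => (2*m+1 : ℝ) * r^(2*m)) := by
  have h2 : |r^2| < 1 := by
    rw [abs_of_nonneg (by positivity)]
    nlinarith
  have h1 : Summable (fun m : ℕ => (m:ℝ) * (r^2)^m) :=
    summable_pow_mul_geometric_of_norm_lt_one 1 (by rwa [Real.norm_eq_abs]) |>.congr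
      (fun m => by ring)
  have h0 : Summable (fun m : ℕ => (r^2)^m) := summable_geometric_of_lt_one (by positivity) (by nlinarith)
  have := (h1.mul_left 2).add h0
  refine this.congr fun m => ?_
  rw [← pow_mul]
  ring

lemma key_sum {y : ℝ} (hy : |y| < 1) :
    (1 - y^2) * (∑' m : ℕ, cc m * ((2*m+1) * y^(2*m)))
      - y * (∑' m : ℕ, cc m * y^(2*m+1)) = 1 := by
  set g : ℕ → ℝ := fun m => (2*m+1 : ℝ) * cc m * y^(2*m) with hgdef
  have hy0 : 0 ≤ |y| := abs_nonneg y
  have hbound : ∀ m : ℕ, ‖g m‖ ≤ (2*m+1 : ℝ) * |y|^(2*m) := by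
    intro m
    rw [hgdef]
    simp only [norm_mul, Real.norm_eq_abs, abs_pow]
    rw [abs_of_nonneg (by positivity : (0:ℝ) ≤ 2*(m:ℝ)+1),
      abs_of_nonneg (cc_pos m).le]
    calc (2*(m:ℝ)+1) * cc m * |y|^(2*m) ≤ (2*(m:ℝ)+1) * 1 * |y|^(2*m) := by
          gcongr; exact cc_le_one m
      _ = (2*(m:ℝ)+1) * |y|^(2*m) := by ring
  have hg : Summable g := (summable_aux hy0 hy).of_norm_bounded hbound
  have hgs : Summable (fun m => g (m+1)) := (summable_nat_add_iff 1).2 hg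
  have hdiff : Summable (fun m => g m - g (m+1)) := hg.sub hgs
  -- tendsto of partial sums of the telescoping series
  have htel : Filter.Tendsto (fun n => ∑ i ∈ Finset.range n, (g i - g (i+1)))
      Filter.atTop (nhds (1 : ℝ)) := by
    have h0 : g 0 = 1 := by simp [hgdef, cc]
    have hgz : Filter.Tendsto g Filter.atTop (nhds 0) := hg.tendsto_atTop_zero
    have : (fun n => ∑ i ∈ Finset.range n, (g i - g (i+1))) = fun n => g 0 - g n := by
      funext n; exact Finset.sum_range_sub' g n
    rw [this, ← sub_zero (1:ℝ), ← h0]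
    exact (tendsto_const_nhds).sub hgz
  -- the LHS is the sum of the telescoping series
  have hT : Summable (fun m : ℕ => cc m * y^(2*m+1)) := by
    apply Summable.of_norm_bounded (summable_aux hy0 hy)
    intro m
    simp only [norm_mul, Real.norm_eq_abs, abs_pow, abs_of_nonneg (cc_pos m).le]
    calc cc m * |y|^(2*m+1) ≤ 1 * |y|^(2*m) := by
          rw [pow_succ]
          have h1 : cc m * (|y|^(2*m) * |y|) ≤ 1 * (|y|^(2*m) * 1) := by
            apply mul_le_mul (cc_le_one m) _ (by positivity) one_pos.le
            exact mul_le_mul_of_nonneg_left hy.le (by positivity)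
          linarith
      _ ≤ (2*(m:ℝ)+1) * |y|^(2*m) := by
          have := pow_nonneg hy0 (2*m)
          nlinarith
  have hP : Summable (fun m : ℕ => cc m * ((2*m+1 : ℝ) * y^(2*m))) := by
    refine hg.congr fun m => ?_
    rw [hgdef]; ring
  have H1 : HasSum (fun m : ℕ => (1-y^2) * (cc m * ((2*m+1 : ℝ) * y^(2*m))))
      ((1-y^2) * ∑' m : ℕ, cc m * ((2*m+1 : ℝ) * y^(2*m))) := hP.hasSum.mul_left _
  have H2 : HasSum (fun m : ℕ => y * (cc m * y^(2*m+1)))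
      (y * ∑' m : ℕ, cc m * y^(2*m+1)) := hT.hasSum.mul_left _
  have H3 := H1.sub H2
  have H4 : (fun m : ℕ => (1-y^2) * (cc m * ((2*m+1 : ℝ) * y^(2*m))) - y * (cc m * y^(2*m+1)))
      = fun m => g m - g (m+1) := by
    funext m
    have hr : cc (m+1) = (2*(m:ℝ)+2) * cc m / (2*(m:ℝ)+3) := by
      have := cc_rec m
      field_simp
      linarith [this]
    simp only [hgdef, hr]
    push_cast
    field_simp
    ring
  rw [H4] at H3
  exact tendsto_nhds_unique H3.tendsto_sum_nat htel

lemma hasDerivAt_T {r : ℝ} (hr : r < 1) {y : ℝ} (hy : y ∈ Set.Ioo (-r) r) :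
    HasDerivAt (fun z => ∑' m : ℕ, cc m * z^(2*m+1))
      (∑' m : ℕ, cc m * ((2*m+1 : ℝ) * y^(2*m))) y := by
  rcases le_or_gt r 0 with h0 | h0
  · exact absurd hy.1 (by simp only [not_lt]; linarith [hy.2, hy.1])
  · exact hasDerivAt_tsum_of_isPreconnected
      (summable_aux h0.le hr)
      isOpen_Ioo (convex_Ioo _ _).isPreconnected
      (fun m z _ => by
        simpa using ((hasDerivAt_pow (2*m+1) z).const_mul (cc m)))
      (fun m z hz => by
        have hz' : |z| ≤ r := by
          rw [abs_le]; exact ⟨hz.1.le, hz.2.le⟩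
        have heq : ‖cc m * ((2*(m:ℝ)+1) * z^(2*m))‖
            = cc m * ((2*(m:ℝ)+1) * |z|^(2*m)) := by
          rw [Real.norm_eq_abs, abs_mul, abs_mul, abs_pow,
            abs_of_nonneg (cc_pos m).le,
            abs_of_nonneg (by positivity : (0:ℝ) ≤ 2*(m:ℝ)+1)]
        rw [heq]
        calc cc m * ((2*(m:ℝ)+1) * |z|^(2*m))
            ≤ 1 * ((2*(m:ℝ)+1) * r^(2*m)) := by
              gcongr
              all_goals first | exact cc_le_one m | exact abs_nonneg z | positivity
          _ = (2*(m:ℝ)+1) * r^(2*m) := one_mul _)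
      (Set.mem_Ioo.2 ⟨by linarith, h0⟩)
      (summable_zero.congr fun m => by simp)
      hy

lemma T_eq {v : ℝ} (hv : |v| < 1) :
    sqrt (1 - v^2) * ∑' m : ℕ, cc m * v^(2*m+1) = arcsin v := by
  set r := (1 + |v|)/2 with hrdef
  have hvr : |v| < r := by rw [hrdef]; linarith
  have hr1 : r < 1 := by rw [hrdef]; linarith
  have hr0 : 0 < r := by rw [hrdef]; positivity
  set D : ℝ → ℝ := fun y => sqrt (1 - y^2) * (∑' m : ℕ, cc m * y^(2*m+1)) - arcsin y
    with hDdef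
  have hD : ∀ y ∈ Set.Ioo (-r) r, HasDerivAt D 0 y := by
    intro y hy
    have hy1 : |y| < 1 := by
      rw [abs_lt]; constructor <;> [linarith [hy.1]; linarith [hy.2]]
    have hy1' : y ≠ 1 := by intro h; rw [h] at hy1; simp at hy1
    have hy1'' : y ≠ -1 := by intro h; rw [h] at hy1; simp at hy1
    have hpos : 0 < 1 - y^2 := by nlinarith [abs_lt.1 hy1]
    have hsq : HasDerivAt (fun z : ℝ => sqrt (1 - z^2)) (-y / sqrt (1 - y^2)) y := by
      have h1 : HasDerivAt (fun z : ℝ => 1 - z^2) (-(2*y)) y := by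
        simpa using ((hasDerivAt_pow 2 y).const_sub 1)
      have := (Real.hasDerivAt_sqrt hpos.ne').comp y h1
      refine this.congr_deriv ?_
      symm
      have hne : sqrt (1 - y^2) ≠ 0 := (Real.sqrt_pos.2 hpos).ne'
      field_simp
    have hT := hasDerivAt_T hr1 hy
    have harcsin := Real.hasDerivAt_arcsin hy1'' hy1'
    have := (hsq.mul hT).sub harcsin
    refine this.congr_deriv ?_
    symm
    have hkey := key_sum hy1
    have hsqrt_pos : 0 < sqrt (1 - y^2) := Real.sqrt_pos.2 hpos
    have hne : sqrt (1 - y^2) ≠ 0 := hsqrt_pos.ne'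
    have hsq_eq : sqrt (1 - y^2) * sqrt (1 - y^2) = 1 - y^2 :=
      Real.mul_self_sqrt hpos.le
    set T := ∑' m : ℕ, cc m * y^(2*m+1) with hT'
    set P := ∑' m : ℕ, cc m * ((2*(m:ℝ)+1) * y^(2*m)) with hP'
    have hexpr : -y / sqrt (1-y^2) * T + sqrt (1-y^2) * P - 1 / sqrt (1-y^2)
        = ((1-y^2) * P - y * T - 1) / sqrt (1-y^2) := by
      rw [eq_div_iff hne]
      field_simp
      linear_combination P * hsq_eq
    rw [hexpr]
    rw [show (1-y^2) * P - y * T - 1 = 0 from by linarith [hkey]]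
    simp
  have hD0 : D 0 = 0 := by
    rw [hDdef]
    simp only
    rw [Real.arcsin_zero]
    have : ∀ m : ℕ, cc m * (0:ℝ)^(2*m+1) = 0 := fun m => by simp
    rw [tsum_congr this]
    simp
  have hDv : D v = 0 := by
    have hmem : ∀ x ∈ Set.uIcc (0:ℝ) v, HasDerivAt D 0 x := by
      intro x hx
      apply hD
      rcases Set.mem_uIcc.1 hx with ⟨h1, h2⟩ | ⟨h1, h2⟩
      · constructor
        · linarith
        · calc x ≤ v := h2
            _ ≤ |v| := le_abs_self v
            _ < r := hvr
      · constructor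
        · have : -r < v := by have := neg_abs_le v; linarith
          linarith
        · linarith
    have := intervalIntegral.integral_eq_sub_of_hasDerivAt (f' := fun _ => (0:ℝ)) hmem
      intervalIntegrable_const
    simp at this
    linarith [this, hD0]
  rw [hDdef] at hDv
  simp only at hDv
  linarith [hDv]

lemma arcsin_sq_eq {y : ℝ} (hy0 : 0 ≤ y) (hy1 : y < 1) :
    arcsin y ^ 2 = ∑' m : ℕ, 2 * cc m * y^(2*m+2) / (2*m+2) := by
  have habs : ∀ u ∈ Set.uIcc (0:ℝ) y, |u| < 1 := by
    intro u hu
    rw [Set.uIcc_of_le hy0] at hu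
    rw [abs_lt]
    exact ⟨by linarith [hu.1], lt_of_le_of_lt hu.2 hy1⟩
  -- FTC
  have hftc : arcsin y ^ 2 = ∫ u in (0:ℝ)..y, 2 * arcsin u * (1 / sqrt (1 - u^2)) := by
    have hderiv : ∀ u ∈ Set.uIcc (0:ℝ) y,
        HasDerivAt (fun z => arcsin z ^ 2) (2 * arcsin u * (1 / sqrt (1 - u^2))) u := by
      intro u hu
      have h := habs u hu
      rw [abs_lt] at h
      have hne1 : u ≠ -1 := by intro e; rw [e] at h; linarith [h.1]
      have hne2 : u ≠ 1 := by intro e; rw [e] at h; linarith [h.2]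
      have := (Real.hasDerivAt_arcsin hne1 hne2).pow 2
      refine this.congr_deriv ?_
      symm
      push_cast
      ring
    have hcont : ContinuousOn (fun u : ℝ => 2 * arcsin u * (1 / sqrt (1 - u^2)))
        (Set.uIcc 0 y) := by
      apply ContinuousOn.mul
      · exact (continuous_const.mul Real.continuous_arcsin).continuousOn
      · apply ContinuousOn.div continuousOn_const
        · exact (Real.continuous_sqrt.comp (by continuity)).continuousOn
        · intro u hu
          have h := habs u hu
          have : 0 < 1 - u^2 := by nlinarith [abs_lt.1 h]
          positivity
    have := intervalIntegral.integral_eq_sub_of_hasDerivAt hderiv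
      (hcont.intervalIntegrable)
    rw [this]
    simp
  rw [hftc]
  -- replace the integrand by the series
  have hcongr : Set.EqOn (fun u : ℝ => 2 * arcsin u * (1 / sqrt (1 - u^2)))
      (fun u : ℝ => ∑' m : ℕ, 2 * cc m * u^(2*m+1)) (Set.uIcc 0 y) := by
    intro u hu
    have h := habs u hu
    have hpos : 0 < 1 - u^2 := by nlinarith [abs_lt.1 h]
    have hT := T_eq h
    have hne : sqrt (1 - u^2) ≠ 0 := (Real.sqrt_pos.2 hpos).ne'
    simp only
    rw [tsum_congr (fun m : ℕ => show 2 * cc m * u^(2*m+1) = 2 * (cc m * u^(2*m+1)) by ring),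
      tsum_mul_left, ← hT]
    field_simp
  rw [intervalIntegral.integral_congr hcongr]
  -- interchange
  rw [intervalIntegral.integral_of_le hy0]
  have hInt : ∀ m : ℕ, MeasureTheory.Integrable (fun u : ℝ => 2 * cc m * u^(2*m+1))
      (MeasureTheory.volume.restrict (Set.Ioc 0 y)) := by
    intro m
    exact (Continuous.integrableOn_Ioc (by continuity))
  have hIval : ∀ m : ℕ, ∫ u in Set.Ioc (0:ℝ) y, ‖2 * cc m * u^(2*m+1)‖
      = 2 * cc m * y^(2*m+2) / (2*m+2) := by
    intro m
    rw [← intervalIntegral.integral_of_le hy0]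
    rw [intervalIntegral.integral_congr (g := fun u : ℝ => 2 * cc m * u^(2*m+1))
      (fun u hu => by
        rw [Set.uIcc_of_le hy0] at hu
        simp only [Real.norm_eq_abs, abs_mul, abs_pow]
        rw [abs_of_nonneg hu.1, abs_of_nonneg (cc_pos m).le, abs_of_nonneg (by norm_num : (0:ℝ) ≤ 2)])]
    rw [intervalIntegral.integral_const_mul, integral_pow]
    push_cast
    ring
  have hsummable : Summable (fun m : ℕ => ∫ u in Set.Ioc (0:ℝ) y, ‖2 * cc m * u^(2*m+1)‖) := by
    apply Summable.of_nonneg_of_le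
      (fun m => by rw [hIval m]; have := cc_pos m; positivity)
      (fun m => ?_)
      (Summable.mul_left (y^2) (summable_geometric_of_lt_one (r := y^2) (by positivity) (by nlinarith)))
    rw [hIval m]
    have h1 : cc m ≤ 1 := cc_le_one m
    have h2 : y^(2*m+2) = y^2 * (y^2)^m := by rw [← pow_mul]; ring
    rw [h2, div_le_iff₀ (by positivity : (0:ℝ) < 2*(m:ℝ)+2)]
    have h4 : 2*cc m ≤ 2*(m:ℝ)+2 := by nlinarith [cc_le_one m]
    nlinarith [mul_le_mul_of_nonneg_right h4 (show (0:ℝ) ≤ y^2*(y^2)^m by positivity)]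
  rw [← MeasureTheory.integral_tsum_of_summable_integral_norm hInt hsummable]
  apply tsum_congr
  intro m
  rw [← intervalIntegral.integral_of_le hy0, intervalIntegral.integral_const_mul, integral_pow]
  push_cast
  ring


lemma J_eq (n : ℕ) : ∫ θ in (0:ℝ)..(π/2), sin θ ^ (2*n)
    = π/2 * (Nat.centralBinom n : ℝ) / 4^n := by
  induction n with
  | zero => simp [Nat.centralBinom]
  | succ k ih =>
    have h2 : 2*(k+1) = (2*k) + 2 := by ring
    rw [h2, integral_sin_pow]
    rw [Real.sin_zero, Real.cos_pi_div_two]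
    simp only [zero_pow, mul_zero, zero_mul, sub_zero, zero_div, zero_add]
    rw [ih]
    have hcb : ((k:ℝ)+1) * (Nat.centralBinom (k+1) : ℝ)
        = 2*(2*(k:ℝ)+1) * (Nat.centralBinom k : ℝ) := by
      exact_mod_cast congrArg (Nat.cast : ℕ → ℝ) (Nat.succ_mul_centralBinom_succ k)
    have hk1 : ((k:ℝ)+1) ≠ 0 := by positivity
    have hcb' : (Nat.centralBinom (k+1) : ℝ)
        = 2*(2*(k:ℝ)+1) * (Nat.centralBinom k : ℝ) / ((k:ℝ)+1) := by
      field_simp; linarith [hcb]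
    rw [hcb', pow_succ]
    push_cast
    field_simp
    ring

lemma sin_image : Real.sin '' Set.Ioo 0 (π/2) = Set.Ioo (0:ℝ) 1 := by
  ext x
  constructor
  · rintro ⟨θ, hθ, rfl⟩
    refine ⟨Real.sin_pos_of_pos_of_lt_pi hθ.1 (by linarith [Real.pi_pos, hθ.2]), ?_⟩
    have := Real.strictMonoOn_sin (a := θ) (b := π/2)
      ⟨by linarith [hθ.1, Real.pi_pos], hθ.2.le⟩
      ⟨by linarith [Real.pi_pos], le_refl _⟩ hθ.2
    rwa [Real.sin_pi_div_two] at this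
  · intro hx
    refine ⟨arcsin x, ⟨Real.arcsin_pos.2 hx.1, ?_⟩, Real.sin_arcsin (by linarith [hx.1]) hx.2.le⟩
    rw [Real.arcsin_lt_pi_div_two]
    exact hx.2

lemma sin_deriv_inj :
    (∀ θ ∈ Set.Ioo 0 (π/2), HasDerivWithinAt Real.sin (Real.cos θ) (Set.Ioo 0 (π/2)) θ)
    ∧ Set.InjOn Real.sin (Set.Ioo 0 (π/2)) := by
  constructor
  · exact fun θ _ => (Real.hasDerivAt_sin θ).hasDerivWithinAt
  · apply Real.injOn_sin.mono
    intro θ hθ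
    exact ⟨by linarith [hθ.1, Real.pi_pos], hθ.2.le⟩

lemma cos_eqon (n : ℕ) : Set.EqOn (fun θ => |Real.cos θ| • ((fun x : ℝ => x^n / sqrt (1 - x^2)) (Real.sin θ)))
    (fun θ => Real.sin θ ^ n) (Set.Ioo 0 (π/2)) := by
  intro θ hθ
  have hcos : 0 < Real.cos θ := Real.cos_pos_of_mem_Ioo
    ⟨by linarith [hθ.1, Real.pi_pos], hθ.2⟩
  have hsq : sqrt (1 - Real.sin θ^2) = Real.cos θ := by
    rw [show 1 - Real.sin θ^2 = Real.cos θ^2 by rw [← Real.sin_sq_add_cos_sq θ]; ring,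
      Real.sqrt_sq hcos.le]
  simp only [smul_eq_mul, hsq, abs_of_pos hcos]
  field_simp

lemma W_eq (n : ℕ) : ∫ x in Set.Ioo (0:ℝ) 1, x^(2*n) / sqrt (1 - x^2)
    = π/2 * (Nat.centralBinom n : ℝ) / 4^n := by
  rw [← sin_image,
    MeasureTheory.integral_image_eq_integral_abs_deriv_smul measurableSet_Ioo
      sin_deriv_inj.1 sin_deriv_inj.2 (fun x : ℝ => x^(2*n) / sqrt (1 - x^2)),
    MeasureTheory.setIntegral_congr_fun measurableSet_Ioo (cos_eqon (2*n)),
    ← MeasureTheory.integral_Ioc_eq_integral_Ioo,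
    ← intervalIntegral.integral_of_le (by positivity : (0:ℝ) ≤ π/2)]
  exact J_eq n

lemma W_integrable (n : ℕ) :
    MeasureTheory.IntegrableOn (fun x : ℝ => x^(2*n) / sqrt (1 - x^2)) (Set.Ioo 0 1) := by
  rw [← sin_image,
    MeasureTheory.integrableOn_image_iff_integrableOn_abs_deriv_smul measurableSet_Ioo
      sin_deriv_inj.1 sin_deriv_inj.2]
  apply (MeasureTheory.integrableOn_congr_fun (cos_eqon (2*n)) measurableSet_Ioo).2
  exact ((by continuity : Continuous (fun θ : ℝ => Real.sin θ ^ (2*n))).integrableOn_Icc).mono_set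
    Set.Ioo_subset_Icc_self

lemma sqrt_integrable (n : ℕ) :
    IntervalIntegrable (fun x : ℝ => x^(2*n) / sqrt (1 - x^2)) MeasureTheory.volume 0 1 := by
  rw [intervalIntegrable_iff_integrableOn_Ioo_of_le (by norm_num)]
  exact W_integrable n

lemma K_eq (n : ℕ) : ∫ x in (0:ℝ)..1, x^(2*n+1) * arccos x
    = (π/2 * (Nat.centralBinom (n+1) : ℝ) / 4^(n+1)) / (2*(n:ℝ)+2) := by
  set f' : ℝ → ℝ := fun x =>
    x^(2*n+1) * arccos x - x^(2*(n+1)) / sqrt (1 - x^2) / (2*(n:ℝ)+2) with hf'def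
  have hint2 : IntervalIntegrable (fun x : ℝ => x^(2*(n+1)) / sqrt (1 - x^2) / (2*(n:ℝ)+2))
      MeasureTheory.volume 0 1 := (sqrt_integrable (n+1)).div_const _
  have hint1 : IntervalIntegrable (fun x : ℝ => x^(2*n+1) * arccos x)
      MeasureTheory.volume 0 1 :=
    ((by continuity : Continuous fun x : ℝ => x^(2*n+1) * arccos x).intervalIntegrable 0 1)
  have hftc : (∫ x in (0:ℝ)..1, f' x) = 0 := by
    have := intervalIntegral.integral_eq_sub_of_hasDeriv_right_of_le
      (f := fun x : ℝ => arccos x * (x^(2*n+2) / (2*(n:ℝ)+2))) (f' := f')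
      (by norm_num)
      (Continuous.continuousOn (by continuity))
      (fun x hx => ?_) (hint1.sub hint2)
    · rw [this]
      norm_num [Real.arccos_one]
    · have h1 : x ≠ -1 := by intro e; rw [e] at hx; norm_num at hx
      have h2 : x ≠ 1 := by intro e; rw [e] at hx; norm_num at hx
      have hpos : 0 < 1 - x^2 := by nlinarith [hx.1, hx.2]
      have hne : sqrt (1 - x^2) ≠ 0 := (Real.sqrt_pos.2 hpos).ne'
      have hd := (Real.hasDerivAt_arccos h1 h2).mul
        ((hasDerivAt_pow (2*n+2) x).div_const (2*(n:ℝ)+2))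
      apply HasDerivAt.hasDerivWithinAt
      refine hd.congr_deriv ?_
      symm
      rw [hf'def]
      simp only
      have h2n : ((2*n+2 : ℕ) : ℝ) = 2*(n:ℝ)+2 := by push_cast; ring
      rw [show 2*(n+1) = 2*n+2 from by ring, show 2*n+2-1 = 2*n+1 from by omega, h2n]
      field_simp
      ring
  have hsub : (∫ x in (0:ℝ)..1, f' x)
      = (∫ x in (0:ℝ)..1, x^(2*n+1) * arccos x)
        - ∫ x in (0:ℝ)..1, x^(2*(n+1)) / sqrt (1 - x^2) / (2*(n:ℝ)+2) := by
    rw [hf'def]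
    exact intervalIntegral.integral_sub hint1 hint2
  have hW : (∫ x in (0:ℝ)..1, x^(2*(n+1)) / sqrt (1 - x^2) / (2*(n:ℝ)+2))
      = (π/2 * (Nat.centralBinom (n+1) : ℝ) / 4^(n+1)) / (2*(n:ℝ)+2) := by
    rw [intervalIntegral.integral_div, intervalIntegral.integral_of_le (by norm_num : (0:ℝ) ≤ 1),
      MeasureTheory.integral_Ioc_eq_integral_Ioo, W_eq]
  rw [hsub, hW] at hftc
  linarith [hftc]

lemma term_eq (t : ℝ) (m : ℕ) :
    2 * cc m * t^(2*m+2) / (2*(m:ℝ)+2) * ((π/2 * (Nat.centralBinom (m+1) : ℝ) / 4^(m+1)) / (2*(m:ℝ)+2))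
      = π/8 * (t ^ (2*(m+1)) / ((m:ℝ)+1)^3) := by
  have h1 := cc_centralBinom m
  have h2 : ((m:ℝ)+1) * (Nat.centralBinom (m+1) : ℝ)
      = 2*(2*(m:ℝ)+1) * (Nat.centralBinom m : ℝ) := by
    exact_mod_cast congrArg (Nat.cast : ℕ → ℝ) (Nat.succ_mul_centralBinom_succ m)
  have hm1 : ((m:ℝ)+1) ≠ 0 := by positivity
  have hm2 : (2*(m:ℝ)+1) ≠ 0 := by positivity
  have hcb : (Nat.centralBinom (m+1) : ℝ)
      = 2*(2*(m:ℝ)+1) * (Nat.centralBinom m : ℝ) / ((m:ℝ)+1) := by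
    field_simp; linarith [h2]
  have hccm : cc m * (Nat.centralBinom m : ℝ) = 4^m / (2*(m:ℝ)+1) := by
    field_simp; linarith [h1]
  have hBpos : (0:ℝ) < (Nat.centralBinom m : ℝ) := by
    exact_mod_cast Nat.centralBinom_pos m
  have hcc : cc m = 4^m / ((2*(m:ℝ)+1) * (Nat.centralBinom m : ℝ)) := by
    field_simp
    linarith [h1]
  rw [hcb, hcc, show 2*(m+1) = 2*m+2 from by ring, pow_succ (4:ℝ) m]
  have h4 : (4:ℝ)^m ≠ 0 := by positivity
  field_simp
  ring

lemma summable_cube : Summable (fun m : ℕ => π/8 * ((1:ℝ)/((m:ℝ)+1)^3)) := by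
  apply Summable.mul_left
  have h : Summable (fun n : ℕ => 1/(n:ℝ)^3) := by
    simpa using Real.summable_one_div_nat_pow.2 (by norm_num : 1 < 3)
  have := (summable_nat_add_iff 1).2 h
  refine this.congr fun m => ?_
  push_cast
  ring

open Real in
theorem cubes_sum_eq_integral (t : ℝ) (ht0 : 0 ≤ t) (ht1 : t ≤ 1) :
    (π / 8) * ∑' n : ℕ, t ^ (2 * (n + 1)) / (n + 1 : ℝ) ^ 3 =
      ∫ x in (0:ℝ)..1, (arcsin (t * x)) ^ 2 * arccos x / x := by
  set F : ℕ → ℝ → ℝ := fun m x =>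
    2 * cc m * t^(2*m+2) / (2*(m:ℝ)+2) * (x^(2*m+1) * arccos x) with hFdef
  -- each term integrates to the cube term
  have hFint : ∀ m : ℕ, MeasureTheory.Integrable (F m)
      (MeasureTheory.volume.restrict (Set.Ioo (0:ℝ) 1)) := by
    intro m
    apply MeasureTheory.Integrable.const_mul
    exact (((by continuity : Continuous fun x : ℝ => x^(2*m+1) * arccos x).integrableOn_Icc).mono_set
      Set.Ioo_subset_Icc_self)
  have hFval : ∀ m : ℕ, (∫ x in Set.Ioo (0:ℝ) 1, F m x)
      = π/8 * (t ^ (2*(m+1)) / ((m:ℝ)+1)^3) := by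
    intro m
    rw [hFdef]
    simp only
    rw [MeasureTheory.integral_const_mul, ← MeasureTheory.integral_Ioc_eq_integral_Ioo,
      ← intervalIntegral.integral_of_le (by norm_num : (0:ℝ) ≤ 1), K_eq m]
    exact term_eq t m
  have hFnonneg : ∀ m : ℕ, ∀ x ∈ Set.Ioo (0:ℝ) 1, 0 ≤ F m x := by
    intro m x hx
    rw [hFdef]
    simp only
    have h1 := cc_pos m
    have h2 := Real.arccos_nonneg x
    have h3 : (0:ℝ) ≤ x := hx.1.le
    positivity
  have hFnorm : ∀ m : ℕ, (∫ x in Set.Ioo (0:ℝ) 1, ‖F m x‖)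
      = π/8 * (t ^ (2*(m+1)) / ((m:ℝ)+1)^3) := by
    intro m
    rw [← hFval m]
    apply MeasureTheory.setIntegral_congr_fun measurableSet_Ioo
    intro x hx
    exact Real.norm_of_nonneg (hFnonneg m x hx)
  have hFsum : Summable (fun m : ℕ => ∫ x in Set.Ioo (0:ℝ) 1, ‖F m x‖) := by
    refine Summable.of_nonneg_of_le (fun m => ?_) (fun m => ?_) summable_cube
    · rw [hFnorm m]
      have := pow_nonneg ht0 (2*(m+1))
      positivity
    · rw [hFnorm m]
      gcongr
      exact pow_le_one₀ ht0 ht1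
  -- integrand equals the series on (0,1)
  have heq : Set.EqOn (fun x : ℝ => arcsin (t*x) ^ 2 * arccos x / x)
      (fun x : ℝ => ∑' m : ℕ, F m x) (Set.Ioo (0:ℝ) 1) := by
    intro x hx
    have hx0 : (0:ℝ) < x := hx.1
    have htx0 : 0 ≤ t * x := mul_nonneg ht0 hx0.le
    have htx1 : t * x < 1 := by nlinarith [hx.2, hx.1]
    simp only
    rw [arcsin_sq_eq htx0 htx1]
    rw [show (∑' m : ℕ, 2 * cc m * (t*x)^(2*m+2) / (2*(m:ℝ)+2)) * arccos x / x
        = (∑' m : ℕ, 2 * cc m * (t*x)^(2*m+2) / (2*(m:ℝ)+2)) * (arccos x / x) from by ring,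
      ← tsum_mul_right]
    apply tsum_congr
    intro m
    rw [hFdef]
    simp only
    rw [mul_pow]
    field_simp
    ring
  rw [intervalIntegral.integral_of_le (by norm_num : (0:ℝ) ≤ 1),
    MeasureTheory.integral_Ioc_eq_integral_Ioo,
    MeasureTheory.setIntegral_congr_fun measurableSet_Ioo heq,
    ← MeasureTheory.integral_tsum_of_summable_integral_norm hFint hFsum,
    ← tsum_mul_left]
  apply tsum_congr
  intro n
  rw [hFval n]
end

section
/- ∑_{n=0}^∞ (−1)ⁿ/(2n+1)³ = ∫₀¹ (arsinh x · arccos x)/x dx, where the integral is taken over the real interval [0,1]. -/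
open Real

noncomputable def aa (n : ℕ) : ℝ := (-1)^n * ((2*n).choose n : ℝ) / 4^n

lemma aa_zero : aa 0 = 1 := by simp [aa]

lemma choose_le_4pow (n : ℕ) : ((2*n).choose n : ℝ) ≤ 4^n := by
  have h : (2*n).choose n ≤ 2^(2*n) := by
    calc (2*n).choose n ≤ ∑ m ∈ Finset.range (2*n+1), (2*n).choose m :=
          Finset.single_le_sum (fun i _ => Nat.zero_le _) (by simp [Nat.lt_succ_iff]; omega)
      _ = 2^(2*n) := Nat.sum_range_choose (2*n)
  calc ((2*n).choose n : ℝ) ≤ (2:ℝ)^(2*n) := by exact_mod_cast h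
    _ = 4^n := by rw [pow_mul]; norm_num

lemma abs_aa_le_one (n : ℕ) : |aa n| ≤ 1 := by
  have h1 : (0:ℝ) < 4^n := by positivity
  have h2 := choose_le_4pow n
  have h3 : (0:ℝ) ≤ ((2*n).choose n : ℝ) := Nat.cast_nonneg _
  rw [aa, abs_div, abs_mul, abs_pow, abs_neg, abs_one, one_pow, one_mul,
    abs_of_nonneg h3, abs_of_pos h1]
  rw [div_le_one h1]; exact h2

lemma aa_rec (n : ℕ) : (2*(n:ℝ)+2) * aa (n+1) = -(2*(n:ℝ)+1) * aa n := by
  have h := Nat.succ_mul_centralBinom_succ n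
  rw [Nat.centralBinom, Nat.centralBinom] at h
  have h' : ((n:ℝ)+1) * ((2*(n+1)).choose (n+1) : ℝ) = 2 * (2*(n:ℝ)+1) * ((2*n).choose n : ℝ) := by
    exact_mod_cast h
  have h4 : (4:ℝ)^(n+1) = 4 * 4^n := by ring
  simp only [aa, pow_succ]
  field_simp
  linear_combination (-2) * h'

lemma aa_def (n : ℕ) : aa n = (-1)^n * ((2*n).choose n : ℝ) / 4^n := rfl

noncomputable def SS (x : ℝ) : ℝ := ∑' n : ℕ, aa n * x^(2*n)
noncomputable def TT (x : ℝ) : ℝ := ∑' n : ℕ, (2*(n:ℕ):ℝ) * aa n * x^(2*n-1)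
noncomputable def hh (x : ℝ) : ℝ := ∑' n : ℕ, aa n * x^(2*n+1) / (2*(n:ℝ)+1)

lemma summable_u1 {r : ℝ} (h0 : 0 < r) (h1 : r < 1) :
    Summable (fun n : ℕ => 2*(n:ℝ) * r^(2*n-1)) := by
  have hr2 : ‖r^2‖ < 1 := by
    rw [Real.norm_eq_abs, abs_of_pos (by positivity)]
    nlinarith
  have hs : Summable (fun n : ℕ => (n:ℝ) * (r^2)^n) := by
    have := summable_pow_mul_geometric_of_norm_lt_one (R := ℝ) 1 hr2
    simpa using this
  apply Summable.of_nonneg_of_le (fun n => by positivity)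
    (fun n => ?_) (hs.mul_left (2/r))
  cases n with
  | zero => simp
  | succ m =>
    have : 2*(m+1) - 1 = 2*m+1 := by omega
    rw [this]
    have : (r^2)^(m+1) = r^(2*m+1) * r := by ring
    rw [this]
    have hrne : r ≠ 0 := ne_of_gt h0
    push_cast
    rw [div_mul_eq_mul_div, le_div_iff₀ h0]
    apply le_of_eq
    ring

lemma summable_u0 {r : ℝ} (h0 : 0 ≤ r) (h1 : r < 1) :
    Summable (fun n : ℕ => r^(2*n)) := by
  have hs : Summable (fun n : ℕ => (r^2)^n) := summable_geometric_of_lt_one (by positivity) (by nlinarith)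
  exact hs.congr (fun n => (pow_mul r 2 n).symm)

lemma S_hasDerivAt {x : ℝ} (hx : |x| < 1) : HasDerivAt SS (TT x) x := by
  set r := (|x|+1)/2 with hr
  have hax : 0 ≤ |x| := abs_nonneg x
  have h0 : 0 < r := by positivity
  have hxr : |x| < r := by rw [hr]; linarith
  have hr1 : r < 1 := by rw [hr]; linarith
  apply hasDerivAt_tsum_of_isPreconnected (summable_u1 h0 hr1) Metric.isOpen_ball
    (convex_ball (0:ℝ) r).isPreconnected
    (g := fun n z => aa n * z^(2*n)) (g' := fun n y => (2*(n:ℕ):ℝ) * aa n * y^(2*n-1))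
    (y₀ := 0) (y := x)
  · intro n y _
    have := (hasDerivAt_pow (2*n) y).const_mul (aa n)
    refine this.congr_deriv ?_
    push_cast
    ring
  · intro n y hy
    rw [Metric.mem_ball, Real.dist_eq, sub_zero] at hy
    rw [norm_mul, norm_mul]
    have h1 : ‖(2*(n:ℕ):ℝ)‖ = 2*(n:ℝ) := by
      rw [Real.norm_eq_abs, abs_of_nonneg (by positivity)]
    have h2 : ‖aa n‖ ≤ 1 := abs_aa_le_one n
    have h3 : ‖y^(2*n-1)‖ ≤ r^(2*n-1) := by
      rw [norm_pow, Real.norm_eq_abs]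
      exact pow_le_pow_left₀ (abs_nonneg y) hy.le _
    calc ‖(2*(n:ℕ):ℝ)‖ * ‖aa n‖ * ‖y^(2*n-1)‖
        ≤ (2*(n:ℝ)) * 1 * r^(2*n-1) := by
          apply mul_le_mul (mul_le_mul_of_nonneg_left h2 (by rw [h1]; positivity)) h3 (norm_nonneg _)
            (by positivity) |>.trans
          rw [h1]
      _ = 2*(n:ℝ) * r^(2*n-1) := by ring
  · rwa [Metric.mem_ball, dist_self]
  · apply summable_of_ne_finset_zero (s := {0})
    intro n hn
    simp only [Finset.mem_singleton] at hn
    rw [zero_pow (by omega), mul_zero]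
  · rwa [Metric.mem_ball, Real.dist_eq, sub_zero]

lemma h_hasDerivAt {x : ℝ} (hx : |x| < 1) : HasDerivAt hh (SS x) x := by
  set r := (|x|+1)/2 with hr
  have hax : 0 ≤ |x| := abs_nonneg x
  have h0 : 0 < r := by positivity
  have hxr : |x| < r := by rw [hr]; linarith
  have hr1 : r < 1 := by rw [hr]; linarith
  apply hasDerivAt_tsum_of_isPreconnected (summable_u0 h0.le hr1) Metric.isOpen_ball
    (convex_ball (0:ℝ) r).isPreconnected
    (g := fun n z => aa n * z^(2*n+1) / (2*(n:ℝ)+1)) (g' := fun n y => aa n * y^(2*n))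
    (y₀ := 0) (y := x)
  · intro n y _
    have h2n : (2*(n:ℝ)+1) ≠ 0 := by positivity
    have := ((hasDerivAt_pow (2*n+1) y).const_mul (aa n)).div_const (2*(n:ℝ)+1)
    refine this.congr_deriv ?_
    have e : (2*n+1) - 1 = 2*n := by omega
    rw [e]
    push_cast
    field_simp
  · intro n y hy
    rw [Metric.mem_ball, Real.dist_eq, sub_zero] at hy
    rw [norm_mul, norm_pow, Real.norm_eq_abs, Real.norm_eq_abs]
    calc |aa n| * |y|^(2*n) ≤ 1 * r^(2*n) := by
          apply mul_le_mul (abs_aa_le_one n) (pow_le_pow_left₀ (abs_nonneg y) hy.le _)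
            (by positivity) zero_le_one
      _ = r^(2*n) := one_mul _
  · rwa [Metric.mem_ball, dist_self]
  · apply summable_of_ne_finset_zero (s := (∅ : Finset ℕ))
    intro n _
    rw [zero_pow (by omega), mul_zero, zero_div]
  · rwa [Metric.mem_ball, Real.dist_eq, sub_zero]

lemma summable_S_terms {x : ℝ} (hx : |x| < 1) : Summable (fun n : ℕ => aa n * x^(2*n)) := by
  apply Summable.of_norm
  apply Summable.of_nonneg_of_le (fun n => norm_nonneg _) (fun n => ?_)
    (summable_u0 (abs_nonneg x) hx)
  rw [norm_mul, norm_pow, Real.norm_eq_abs, Real.norm_eq_abs]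
  calc |aa n| * |x|^(2*n) ≤ 1 * |x|^(2*n) :=
        mul_le_mul_of_nonneg_right (abs_aa_le_one n) (by positivity)
    _ = |x|^(2*n) := one_mul _

lemma summable_T_terms {x : ℝ} (hx : |x| < 1) :
    Summable (fun n : ℕ => (2*(n:ℕ):ℝ) * aa n * x^(2*n-1)) := by
  set r := (|x|+1)/2 with hr
  have hax : 0 ≤ |x| := abs_nonneg x
  have h0 : 0 < r := by positivity
  have hxr : |x| < r := by rw [hr]; linarith
  have hr1 : r < 1 := by rw [hr]; linarith
  apply Summable.of_norm
  apply Summable.of_nonneg_of_le (fun n => norm_nonneg _) (fun n => ?_) (summable_u1 h0 hr1)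
  rw [norm_mul, norm_mul, norm_pow, Real.norm_eq_abs, Real.norm_eq_abs, Real.norm_eq_abs]
  have h1 : |(2*(n:ℕ):ℝ)| = 2*(n:ℝ) := by rw [abs_of_nonneg (by positivity)]
  rw [h1]
  have h3 : |x|^(2*n-1) ≤ r^(2*n-1) := pow_le_pow_left₀ (abs_nonneg x) hxr.le _
  have h2 := abs_aa_le_one n
  calc 2*(n:ℝ) * |aa n| * |x|^(2*n-1) ≤ 2*(n:ℝ) * 1 * r^(2*n-1) := by
        apply mul_le_mul _ h3 (by positivity) (by positivity)
        exact mul_le_mul_of_nonneg_left h2 (by positivity)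
    _ = 2*(n:ℝ) * r^(2*n-1) := by ring

lemma ode_identity {x : ℝ} (hx : |x| < 1) : (1+x^2) * TT x + x * SS x = 0 := by
  have hS := summable_S_terms hx
  have hT := summable_T_terms hx
  -- f1 n = 2(n+1) aa(n+1) x^(2n+1), f2 n = 2n aa n x^(2n+1), f3 n = aa n x^(2n+1)
  have hf1 : Summable (fun n : ℕ => (2*((n:ℝ)+1)) * aa (n+1) * x^(2*n+1)) := by
    have := (summable_nat_add_iff 1).mpr hT
    apply this.congr
    intro n
    have e : 2*(n+1) - 1 = 2*n+1 := by omega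
    simp only [e]
    push_cast
    ring
  have hf2 : Summable (fun n : ℕ => (2*(n:ℝ)) * aa n * x^(2*n+1)) := by
    have := hT.mul_left (x^2)
    apply this.congr
    intro n
    cases n with
    | zero => simp
    | succ m =>
      have e : 2*(m+1) - 1 = 2*m+1 := by omega
      simp only [e]
      push_cast
      ring
  have hf3 : Summable (fun n : ℕ => aa n * x^(2*n+1)) := by
    have := hS.mul_left x
    apply this.congr
    intro n
    ring
  -- express the three products as tsums
  have eT : TT x = ∑' n : ℕ, (2*((n:ℝ)+1)) * aa (n+1) * x^(2*n+1) := by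
    rw [TT, hT.tsum_eq_zero_add]
    simp only [Nat.cast_zero, mul_zero, zero_mul, zero_add, Nat.cast_ofNat]
    apply tsum_congr
    intro n
    have e : 2*(n+1) - 1 = 2*n+1 := by omega
    simp only [e]
    push_cast
    ring
  have eT2 : x^2 * TT x = ∑' n : ℕ, (2*(n:ℝ)) * aa n * x^(2*n+1) := by
    rw [TT, ← tsum_mul_left]
    apply tsum_congr
    intro n
    cases n with
    | zero => simp
    | succ m =>
      have e : 2*(m+1) - 1 = 2*m+1 := by omega
      simp only [e]
      push_cast
      ring
  have eS : x * SS x = ∑' n : ℕ, aa n * x^(2*n+1) := by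
    rw [SS, ← tsum_mul_left]
    apply tsum_congr
    intro n
    ring
  have expand : (1+x^2) * TT x = TT x + x^2 * TT x := by ring
  rw [expand, eT2, eS]
  nth_rewrite 1 [eT]
  rw [← hf1.tsum_add hf2, ← (hf1.add hf2).tsum_add hf3]
  have : ∀ n : ℕ, (2*((n:ℝ)+1)) * aa (n+1) * x^(2*n+1) + (2*(n:ℝ)) * aa n * x^(2*n+1)
      + aa n * x^(2*n+1) = 0 := by
    intro n
    have h := aa_rec n
    linear_combination x^(2*n+1) * h
  rw [tsum_congr this, tsum_zero]

lemma SS_zero : SS 0 = 1 := by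
  rw [SS, tsum_eq_single 0]
  · simp [aa_zero]
  · intro n hn
    rw [zero_pow (by omega), mul_zero]

lemma sqrt_deriv (y : ℝ) : HasDerivAt (fun z => Real.sqrt (1+z^2)) (y / Real.sqrt (1+y^2)) y := by
  have h1 : HasDerivAt (fun z : ℝ => 1+z^2) (2*y) y := by
    simpa using (hasDerivAt_pow 2 y).const_add 1
  have h2 : (1:ℝ)+y^2 ≠ 0 := by positivity
  have := (Real.hasDerivAt_sqrt h2).comp y h1
  refine this.congr_deriv ?_
  have h3 : Real.sqrt (1+y^2) ≠ 0 := by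
    refine Real.sqrt_ne_zero'.mpr (by positivity)
  field_simp

lemma SS_eq {x : ℝ} (h0 : 0 ≤ x) (h1 : x < 1) : SS x = (Real.sqrt (1+x^2))⁻¹ := by
  set φ := fun y => SS y * Real.sqrt (1+y^2) with hφ
  have key : ∀ y ∈ Set.Icc (0:ℝ) x, φ y = φ 0 := by
    apply constant_of_has_deriv_right_zero
    · intro y hy
      have hy1 : |y| < 1 := by
        rw [abs_lt]; constructor <;> [linarith [hy.1]; linarith [hy.2]]
      exact (((S_hasDerivAt hy1).mul (sqrt_deriv y)).continuousAt).continuousWithinAt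
    · intro y hy
      have hy1 : |y| < 1 := by
        rw [abs_lt]; constructor <;> [linarith [hy.1]; linarith [hy.2.le, h1]]
      have hd := (S_hasDerivAt hy1).mul (sqrt_deriv y)
      have hzero : TT y * Real.sqrt (1+y^2) + SS y * (y / Real.sqrt (1+y^2)) = 0 := by
        have hs : Real.sqrt (1+y^2) ≠ 0 := Real.sqrt_ne_zero'.mpr (by positivity)
        have hsq : Real.sqrt (1+y^2) ^ 2 = 1+y^2 := Real.sq_sqrt (by positivity)
        have hode := ode_identity hy1
        field_simp
        linear_combination TT y * hsq + hode
      rw [hzero] at hd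
      exact hd.hasDerivWithinAt
  have hx0 : φ x = 1 := by
    rw [key x (Set.mem_Icc.mpr ⟨h0, le_refl x⟩), hφ]
    simp [SS_zero]
  have hs : Real.sqrt (1+x^2) ≠ 0 := Real.sqrt_ne_zero'.mpr (by positivity)
  have : SS x * Real.sqrt (1+x^2) = 1 := hx0
  field_simp at this ⊢
  linarith [this]

lemma hh_zero : hh 0 = 0 := by
  rw [hh]
  have : ∀ n : ℕ, aa n * (0:ℝ)^(2*n+1) / (2*(n:ℝ)+1) = 0 := by
    intro n
    rw [zero_pow (by omega), mul_zero, zero_div]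
  rw [tsum_congr this, tsum_zero]

lemma hh_eq_arsinh {x : ℝ} (h0 : 0 ≤ x) (h1 : x < 1) : hh x = Real.arsinh x := by
  set ψ := fun y => hh y - Real.arsinh y with hψ
  have key : ∀ y ∈ Set.Icc (0:ℝ) x, ψ y = ψ 0 := by
    apply constant_of_has_deriv_right_zero
    · intro y hy
      have hy1 : |y| < 1 := by
        rw [abs_lt]; constructor <;> [linarith [hy.1]; linarith [hy.2]]
      exact (((h_hasDerivAt hy1).sub (Real.hasDerivAt_arsinh y)).continuousAt).continuousWithinAt
    · intro y hy
      have hy1 : |y| < 1 := by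
        rw [abs_lt]; constructor <;> [linarith [hy.1]; linarith [hy.2.le, h1]]
      have hd := (h_hasDerivAt hy1).sub (Real.hasDerivAt_arsinh y)
      have hz : SS y - (Real.sqrt (1+y^2))⁻¹ = 0 := by
        rw [SS_eq hy.1 (by linarith [hy.2.le, h1]), sub_self]
      rw [hz] at hd
      exact hd.hasDerivWithinAt
  have := key x (Set.mem_Icc.mpr ⟨h0, le_refl x⟩)
  rw [hψ] at this
  simp only [hh_zero, Real.arsinh_zero, sub_zero] at this
  linarith [this]

noncomputable def W (n : ℕ) : ℝ := ∫ θ in (0:ℝ)..(π/2), cos θ ^ (2*n+1)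

lemma W_zero : W 0 = 1 := by
  simp [W, integral_cos]

lemma W_succ (n : ℕ) : W (n+1) = (2*(n:ℝ)+2)/(2*(n:ℝ)+3) * W n := by
  have h := integral_cos_pow (a := 0) (b := π/2) (2*n+1)
  have e : 2*(n+1)+1 = (2*n+1)+2 := by omega
  rw [W, e, h]
  rw [Real.sin_pi_div_two, Real.cos_pi_div_two, Real.sin_zero]
  rw [zero_pow (by omega)]
  push_cast
  rw [W]
  ring

lemma choose_pos (n : ℕ) : (0:ℝ) < ((2*n).choose n : ℝ) := by
  exact_mod_cast Nat.choose_pos (by omega)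

lemma keyIdent (n : ℕ) : (2*(n:ℝ)+1) * ((2*n).choose n : ℝ) * W n = 4^n := by
  induction n with
  | zero => simp [W_zero]
  | succ m ih =>
    have hc := Nat.succ_mul_centralBinom_succ m
    rw [Nat.centralBinom, Nat.centralBinom] at hc
    have hc' : ((m:ℝ)+1) * ((2*(m+1)).choose (m+1) : ℝ)
        = 2 * (2*(m:ℝ)+1) * ((2*m).choose m : ℝ) := by exact_mod_cast hc
    rw [W_succ]
    have h3 : (2*(m:ℝ)+3) ≠ 0 := by positivity
    push_cast
    have e4 : (4:ℝ)^(m+1) = 4 * 4^m := by ring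
    rw [e4]
    field_simp
    linear_combination (2*(2*(m:ℝ)+3)*W m)*hc' + (4*(2*(m:ℝ)+3))*ih

noncomputable def K (n : ℕ) : ℝ := ∫ x in (0:ℝ)..1, x^(2*n) * arccos x

lemma K_eq_theta (n : ℕ) : K n = ∫ θ in (0:ℝ)..(π/2), θ * (sin θ * cos θ^(2*n)) := by
  have hpi : (0:ℝ) < π/2 := by positivity
  have hsub := intervalIntegral.integral_comp_smul_deriv
    (a := (0:ℝ)) (b := π/2) (f := cos) (f' := fun θ => -sin θ)
    (g := fun x => x^(2*n) * arccos x)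
    (fun θ _ => Real.hasDerivAt_cos θ)
    (continuous_sin.neg.continuousOn)
    ((continuous_pow (2*n)).mul Real.continuous_arccos)
  rw [Real.cos_zero, Real.cos_pi_div_two] at hsub
  have h1 : (∫ x in (1:ℝ)..0, x^(2*n) * arccos x) = - K n := by
    rw [K, intervalIntegral.integral_symm]
  rw [h1] at hsub
  have h2 : (∫ θ in (0:ℝ)..(π/2), (-sin θ) • ((fun x => x^(2*n) * arccos x) ∘ cos) θ)
      = ∫ θ in (0:ℝ)..(π/2), -(θ * (sin θ * cos θ^(2*n))) := by
    apply intervalIntegral.integral_congr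
    intro θ hθ
    rw [Set.uIcc_of_le hpi.le] at hθ
    have hθ1 : 0 ≤ θ := hθ.1
    have hθ2 : θ ≤ π := le_trans hθ.2 (by linarith [Real.pi_pos])
    simp only [Function.comp_apply, smul_eq_mul]
    rw [Real.arccos_cos hθ1 hθ2]
    ring
  rw [h2, intervalIntegral.integral_neg] at hsub
  linarith [hsub]

lemma K_eq_s8 (n : ℕ) : K n = W n / (2*(n:ℝ)+1) := by
  have h2n : (2*(n:ℝ)+1) ≠ 0 := by positivity
  have hv : ∀ θ : ℝ, HasDerivAt (fun t => -(cos t^(2*n+1))/(2*(n:ℝ)+1)) (sin θ * cos θ^(2*n)) θ := by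
    intro θ
    have h1 := (Real.hasDerivAt_cos θ).pow (2*n+1)
    have e : 2*n+1-1 = 2*n := by omega
    rw [e] at h1
    have := (h1.neg).div_const (2*(n:ℝ)+1)
    refine this.congr_deriv ?_
    push_cast
    field_simp
  have hparts := intervalIntegral.integral_mul_deriv_eq_deriv_mul
    (a := (0:ℝ)) (b := π/2) (u := fun θ => θ) (u' := fun _ => (1:ℝ))
    (v := fun t => -(cos t^(2*n+1))/(2*(n:ℝ)+1)) (v' := fun θ => sin θ * cos θ^(2*n))
    (fun θ _ => hasDerivAt_id θ) (fun θ _ => hv θ)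
    (intervalIntegrable_const)
    ((continuous_sin.mul (continuous_cos.pow (2*n))).intervalIntegrable 0 (π/2))
  rw [K_eq_theta, hparts]
  simp only [Real.cos_pi_div_two, Real.cos_zero, one_mul, one_pow,
    zero_pow (show 2*n+1 ≠ 0 by omega)]
  rw [intervalIntegral.integral_div, intervalIntegral.integral_neg, ← W]
  ring

noncomputable def F (n : ℕ) (x : ℝ) : ℝ := aa n / (2*(n:ℝ)+1) * (x^(2*n) * arccos x)

lemma F_cont (n : ℕ) : Continuous (F n) := by
  apply continuous_const.mul ((continuous_pow (2*n)).mul Real.continuous_arccos)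

lemma F_integrableOn (n : ℕ) : MeasureTheory.IntegrableOn (F n) (Set.Ioo (0:ℝ) 1) := by
  exact ((F_cont n).integrableOn_Icc (a := 0) (b := 1)).mono_set Set.Ioo_subset_Icc_self

lemma Ioo_int_eq (n : ℕ) : ∫ x in Set.Ioo (0:ℝ) 1, x^(2*n) * arccos x = K n := by
  rw [K, intervalIntegral.integral_of_le (by norm_num : (0:ℝ) ≤ 1),
    MeasureTheory.integral_Ioc_eq_integral_Ioo]

lemma term_int (n : ℕ) : ∫ x in Set.Ioo (0:ℝ) 1, F n x = (-1)^n / (2*(n:ℝ)+1)^3 := by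
  rw [show F n = fun x => aa n / (2*(n:ℝ)+1) * (x^(2*n) * arccos x) from rfl]
  rw [MeasureTheory.integral_const_mul, Ioo_int_eq, K_eq_s8]
  have h2n : (2*(n:ℝ)+1) ≠ 0 := by positivity
  have h4 : ((4:ℝ)^n) ≠ 0 := by positivity
  have hk := keyIdent n
  rw [aa_def]
  field_simp
  linear_combination hk

lemma norm_int (n : ℕ) : ∫ x in Set.Ioo (0:ℝ) 1, ‖F n x‖ = 1 / (2*(n:ℝ)+1)^3 := by
  have habs : ∀ x : ℝ, ‖F n x‖ = (((2*n).choose n : ℝ)/(4^n * (2*(n:ℝ)+1))) * (x^(2*n) * arccos x) := by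
    intro x
    have hnn : (0:ℝ) ≤ x^(2*n) * arccos x :=
      mul_nonneg (by rw [pow_mul]; positivity) (Real.arccos_nonneg x)
    rw [Real.norm_eq_abs, F, abs_mul, abs_of_nonneg hnn]
    congr 1
    rw [abs_div, aa_def, abs_div, abs_mul, abs_pow, abs_neg, abs_one, one_pow, one_mul,
      abs_of_nonneg (Nat.cast_nonneg _), abs_of_nonneg (by positivity : (0:ℝ) ≤ 4^n),
      abs_of_nonneg (by positivity : (0:ℝ) ≤ 2*(n:ℝ)+1)]
    rw [div_div]
  simp only [habs]
  rw [MeasureTheory.integral_const_mul, Ioo_int_eq, K_eq_s8]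
  have h2n : (2*(n:ℝ)+1) ≠ 0 := by positivity
  have h4 : ((4:ℝ)^n) ≠ 0 := by positivity
  have hc := choose_pos n
  have hk := keyIdent n
  field_simp
  linear_combination hk

lemma summable_cubes : Summable (fun n : ℕ => 1/(2*(n:ℝ)+1)^3) := by
  have h2 : Summable (fun n : ℕ => 1/((n:ℝ)+1)^2) := by
    have := (summable_nat_add_iff (f := fun n : ℕ => 1/(n:ℝ)^2) 1).mpr
      (summable_one_div_nat_pow.mpr one_lt_two)
    simpa using this
  apply h2.of_nonneg_of_le (fun n => by positivity)
  intro n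
  apply one_div_le_one_div_of_le (by positivity)
  have hn : (0:ℝ) ≤ (n:ℝ) := Nat.cast_nonneg n
  nlinarith [hn, mul_nonneg (mul_nonneg hn hn) hn, mul_nonneg hn hn]

open Real in
open Real in
theorem alt_odd_cubes_sum_eq_arsinh_integral :
    ∑' n : ℕ, (-1 : ℝ) ^ n / (2 * n + 1 : ℝ) ^ 3 =
      ∫ x in (0:ℝ)..1, arsinh x * arccos x / x := by
  rw [intervalIntegral.integral_of_le (by norm_num : (0:ℝ) ≤ 1),
    MeasureTheory.integral_Ioc_eq_integral_Ioo]
  have step1 : ∫ x in Set.Ioo (0:ℝ) 1, arsinh x * arccos x / x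
      = ∫ x in Set.Ioo (0:ℝ) 1, ∑' n : ℕ, F n x := by
    apply MeasureTheory.setIntegral_congr_fun measurableSet_Ioo
    intro x hx
    have hx0 : x ≠ 0 := ne_of_gt hx.1
    have habs : |x| < 1 := by
      rw [abs_of_pos hx.1]; exact hx.2
    simp only
    rw [← hh_eq_arsinh hx.1.le hx.2, hh, mul_div_assoc, ← tsum_mul_right]
    apply tsum_congr
    intro n
    rw [F]
    field_simp
    ring
  rw [step1, ← MeasureTheory.integral_tsum_of_summable_integral_norm
    (fun n => (F_integrableOn n)) ?_]
  · apply tsum_congr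
    intro n
    exact (term_int n).symm
  · apply Summable.congr summable_cubes
    intro n
    rw [norm_int n]
end
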